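/- arXiv:1511.07957 — 3 statements merged into one kernel-verified Lean document; each statement's English description precedes it below -/
import Mathlib

section
/- Let L ≥ 1 and for x ∈ ℝ define the L-periodic mollified distance d_L(x,0) = d_max − ( [ d_max − ( d̃_L(x,0)² + 1 )^{1/2} ]² + 1 )^{1/2}, where d̃_L(x,0) = min_{k∈ℤ} |x − Lk| and d_max = (L²/4 + 1)^{1/2}. Then the function x ↦ d_L(x,0) is twice continuously differentiable on ℝ, its first derivative satisfies |∂_x d_L(x,0)| ≤ 1 for all x, and its second derivative satisfies |∂²_x d_L(x,0)| ≤ 2 for all x; in particular both derivative bounds are independent of L. -/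
open scoped BigOperators Real
open MeasureTheory

noncomputable section

/-- The periodic distance `min_{k ∈ ℤ} |x - L k|`. -/
def dtilde (L x : ℝ) : ℝ := sInf {r : ℝ | ∃ k : ℤ, r = |x - L * k|}

/-- The mollified periodic distance `d_L(x, 0)`. -/
def dmol (L x : ℝ) : ℝ :=
  Real.sqrt (L ^ 2 / 4 + 1) -
    Real.sqrt ((Real.sqrt (L ^ 2 / 4 + 1) - Real.sqrt (dtilde L x ^ 2 + 1)) ^ 2 + 1)

/-- The mollified periodic distance `d_L(x, y)`. -/
def dL (L x y : ℝ) : ℝ := dmol L (x - y)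

/-- The grid point `x_i = i Δx`, with `Δx = L / N`. -/
def gridX (L : ℝ) (N : ℕ) (i : ZMod N) : ℝ := (ZMod.val i : ℝ) * (L / N)

/-- Forward difference operator on periodic lattice functions. -/
def Dplus {N : ℕ} (dx : ℝ) (f : ZMod N → ℂ) : ZMod N → ℂ :=
  fun i => (f (i + 1) - f i) / (dx : ℂ)

/-- Backward difference operator on periodic lattice functions. -/
def Dminus {N : ℕ} (dx : ℝ) (f : ZMod N → ℂ) : ZMod N → ℂ :=
  fun i => (f i - f (i - 1)) / (dx : ℂ)

/-- Second order finite difference Laplacian `Δ = 𝒟⁺𝒟⁻`. -/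
def discLap {N : ℕ} (dx : ℝ) (f : ZMod N → ℂ) : ZMod N → ℂ :=
  Dplus dx (Dminus dx f)

/-- Weighted `ℓ²` norm `(w Σ |f i|²)^{1/2}`; with `w = Δx` this is `‖·‖_{L²(𝒳)}`,
with `w = Δk` this is `‖·‖_{L²(𝒦)}`. -/
def wnorm {N : ℕ} [NeZero N] (w : ℝ) (f : ZMod N → ℂ) : ℝ :=
  Real.sqrt (w * ∑ i : ZMod N, ‖f i‖ ^ 2)

/-- The Fourier grid point `k = n Δk` with `n ∈ (-N/2, N/2]` corresponding to `j ∈ ZMod N`. -/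
def kval (L : ℝ) (N : ℕ) (j : ZMod N) : ℝ :=
  ((if (ZMod.val j : ℤ) ≤ (N : ℤ) / 2 then (ZMod.val j : ℤ) else (ZMod.val j : ℤ) - (N : ℤ)) : ℝ) *
    (2 * Real.pi / L)

/-- Discrete Fourier transform `f̂_k = Δx Σ_x e^{-i k x} f(x)`. -/
def dft (L : ℝ) {N : ℕ} [NeZero N] (f : ZMod N → ℂ) (j : ZMod N) : ℂ :=
  ((L / N : ℝ) : ℂ) *
    ∑ i : ZMod N, Complex.exp (-Complex.I * (kval L N j : ℂ) * ((gridX L N i : ℝ) : ℂ)) * f i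

/-- Inverse discrete Fourier transform `f(x) = (1/L) Σ_k e^{i k x} f̂_k`. -/
def idft (L : ℝ) {N : ℕ} [NeZero N] (fh : ZMod N → ℂ) (i : ZMod N) : ℂ :=
  ((1 / L : ℝ) : ℂ) *
    ∑ j : ZMod N, Complex.exp (Complex.I * (kval L N j : ℂ) * ((gridX L N i : ℝ) : ℂ)) * fh j

/-- Periodic difference operator on the Fourier grid, `(𝒟 f̂)_k = (f̂_k - f̂_{k-Δk})/Δk`. -/
def Dk {N : ℕ} (dk : ℝ) (fh : ZMod N → ℂ) : ZMod N → ℂ :=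
  fun j => (fh j - fh (j - 1)) / (dk : ℂ)

/-- Real-valued version of the periodic difference operator on the Fourier grid. -/
def DkR {N : ℕ} (dk : ℝ) (fh : ZMod N → ℝ) : ZMod N → ℝ :=
  fun j => (fh j - fh (j - 1)) / dk

/-- The distance `d(x,0)`: equal to `x` on `[0, L/2)` and `L - x` on `[L/2, L)`. -/
def dfun (L x : ℝ) : ℝ := if x < L / 2 then x else L - x

/-- The mollified symbol `ĥ_k = θ̂(k)(k² - k_c²) + k_c²` on the Fourier grid, `k_c = π N / L`. -/
def hsym (L : ℝ) (N : ℕ) (θ : ℝ → ℝ) (j : ZMod N) : ℝ :=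
  θ (kval L N j) * ((kval L N j) ^ 2 - (Real.pi * N / L) ^ 2) + (Real.pi * N / L) ^ 2

/-- The Fourier space Hamiltonian matrix `Ĥ_{kl} = ĥ_k δ_{kl} + (1/L) V̂_{k-l}`. -/
def Hmat (L : ℝ) {N : ℕ} [NeZero N] (hh : ZMod N → ℝ) (V : ZMod N → ℝ) :
    Matrix (ZMod N) (ZMod N) ℂ :=
  Matrix.of fun k l =>
    (if k = l then (hh k : ℂ) else 0) + ((1 / L : ℝ) : ℂ) * dft L (fun i => (V i : ℂ)) (k - l)

end


noncomputable section AuxStmt0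
open Filter Set Topology

lemma dtilde_shift (L : ℝ) (m : ℤ) (x : ℝ) : dtilde L (x + L * m) = dtilde L x := by
  unfold dtilde
  congr 1
  ext r
  constructor
  · rintro ⟨k, rfl⟩
    exact ⟨k - m, by push_cast; ring_nf⟩
  · rintro ⟨k, rfl⟩
    exact ⟨k + m, by push_cast; ring_nf⟩

lemma dtilde_eq_abs {L : ℝ} (hL : 0 < L) {v : ℝ} (hv : |v| ≤ L / 2) :
    dtilde L v = |v| := by
  apply IsLeast.csInf_eq
  constructor
  · exact ⟨0, by simp⟩
  · rintro r ⟨k, rfl⟩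
    rcases eq_or_ne k 0 with rfl | hk
    · simp
    · have h1 : (1 : ℝ) ≤ |(k : ℝ)| := by
        have := Int.one_le_abs hk
        calc (1:ℝ) ≤ (|k| : ℤ) := by exact_mod_cast this
          _ = |(k:ℝ)| := by push_cast; rfl
      have h2 : L ≤ |L * k| := by
        rw [abs_mul, abs_of_pos hL]
        nlinarith
      have h3 : |L * k| - |v| ≤ |v - L * k| := by
        have := abs_sub_abs_le_abs_sub (L * k) v
        have h4 : |L * k - v| = |v - L * k| := abs_sub_comm _ _
        linarith
      linarith

def phi (L x : ℝ) : ℝ :=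
  Real.sqrt (L ^ 2 / 4 + 1) -
    Real.sqrt ((Real.sqrt (L ^ 2 / 4 + 1) - Real.sqrt (x ^ 2 + 1)) ^ 2 + 1)

def phi' (L x : ℝ) : ℝ :=
  (Real.sqrt (L ^ 2 / 4 + 1) - Real.sqrt (x ^ 2 + 1)) * x /
    (Real.sqrt (x ^ 2 + 1) *
      Real.sqrt ((Real.sqrt (L ^ 2 / 4 + 1) - Real.sqrt (x ^ 2 + 1)) ^ 2 + 1))

lemma s_pos (x : ℝ) : 0 < Real.sqrt (x ^ 2 + 1) := Real.sqrt_pos.2 (by positivity)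

lemma S_pos (L x : ℝ) :
    0 < Real.sqrt ((Real.sqrt (L ^ 2 / 4 + 1) - Real.sqrt (x ^ 2 + 1)) ^ 2 + 1) :=
  Real.sqrt_pos.2 (by positivity)

lemma s_sq (x : ℝ) : Real.sqrt (x ^ 2 + 1) ^ 2 = x ^ 2 + 1 :=
  Real.sq_sqrt (by positivity)

lemma hasDerivAt_phi (L x : ℝ) : HasDerivAt (phi L) (phi' L x) x := by
  set d := Real.sqrt (L ^ 2 / 4 + 1) with hd
  have h1 : HasDerivAt (fun x : ℝ => x ^ 2 + 1) (2 * x) x := by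
    simpa using (hasDerivAt_pow 2 x).add_const 1
  have h2 : HasDerivAt (fun x : ℝ => Real.sqrt (x ^ 2 + 1))
      (2 * x / (2 * Real.sqrt (x ^ 2 + 1))) x :=
    h1.sqrt (by positivity)
  have h3 : HasDerivAt (fun x : ℝ => (d - Real.sqrt (x ^ 2 + 1)) ^ 2 + 1)
      (2 * (d - Real.sqrt (x ^ 2 + 1)) ^ 1 * (-(2 * x / (2 * Real.sqrt (x ^ 2 + 1))))) x :=
    ((h2.const_sub d).pow 2).add_const 1
  have h4 := (h3.sqrt (by positivity)).const_sub d
  have hs := s_pos x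
  have hS := S_pos L x
  rw [← hd] at hS
  refine h4.congr_deriv (Eq.symm ?_)
  unfold phi' 
  rw [← hd]
  field_simp

def phi2 (L x : ℝ) : ℝ :=
  ((Real.sqrt (L ^ 2 / 4 + 1) - Real.sqrt (x ^ 2 + 1)) * Real.sqrt (x ^ 2 + 1) ^ 2 *
        Real.sqrt ((Real.sqrt (L ^ 2 / 4 + 1) - Real.sqrt (x ^ 2 + 1)) ^ 2 + 1) ^ 2 -
      x ^ 2 * Real.sqrt (x ^ 2 + 1) *
        Real.sqrt ((Real.sqrt (L ^ 2 / 4 + 1) - Real.sqrt (x ^ 2 + 1)) ^ 2 + 1) ^ 2 -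
      (Real.sqrt (L ^ 2 / 4 + 1) - Real.sqrt (x ^ 2 + 1)) * x ^ 2 *
        Real.sqrt ((Real.sqrt (L ^ 2 / 4 + 1) - Real.sqrt (x ^ 2 + 1)) ^ 2 + 1) ^ 2 +
      (Real.sqrt (L ^ 2 / 4 + 1) - Real.sqrt (x ^ 2 + 1)) ^ 2 * x ^ 2 *
        Real.sqrt (x ^ 2 + 1)) /
    (Real.sqrt (x ^ 2 + 1) ^ 3 *
      Real.sqrt ((Real.sqrt (L ^ 2 / 4 + 1) - Real.sqrt (x ^ 2 + 1)) ^ 2 + 1) ^ 3)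

lemma hasDerivAt_phi' (L x : ℝ) : HasDerivAt (phi' L) (phi2 L x) x := by
  have hs := s_pos x
  have hS := S_pos L x
  set d := Real.sqrt (L ^ 2 / 4 + 1) with hd
  set s := Real.sqrt (x ^ 2 + 1) with hs'
  set S := Real.sqrt ((d - s) ^ 2 + 1) with hS'
  have h1 : HasDerivAt (fun x : ℝ => x ^ 2 + 1) (2 * x) x := by
    simpa using (hasDerivAt_pow 2 x).add_const 1
  have h2 : HasDerivAt (fun x : ℝ => Real.sqrt (x ^ 2 + 1)) (2 * x / (2 * s)) x :=
    h1.sqrt (by positivity)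
  have h3 : HasDerivAt (fun x : ℝ => (d - Real.sqrt (x ^ 2 + 1)) ^ 2 + 1)
      (2 * (d - s) ^ 1 * (-(2 * x / (2 * s)))) x :=
    ((h2.const_sub d).pow 2).add_const 1
  have h4 : HasDerivAt (fun x : ℝ => Real.sqrt ((d - Real.sqrt (x ^ 2 + 1)) ^ 2 + 1))
      (2 * (d - s) ^ 1 * (-(2 * x / (2 * s))) / (2 * S)) x :=
    h3.sqrt (by positivity)
  have hN : HasDerivAt (fun x : ℝ => (d - Real.sqrt (x ^ 2 + 1)) * x)
      ((-(2 * x / (2 * s))) * x + (d - s) * 1) x :=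
    (h2.const_sub d).mul (hasDerivAt_id x)
  have hM : HasDerivAt
      (fun x : ℝ => Real.sqrt (x ^ 2 + 1) * Real.sqrt ((d - Real.sqrt (x ^ 2 + 1)) ^ 2 + 1))
      (2 * x / (2 * s) * S + s * (2 * (d - s) ^ 1 * (-(2 * x / (2 * s))) / (2 * S))) x :=
    h2.mul h4
  have hdiv := hN.div hM (by positivity)
  refine hdiv.congr_deriv (Eq.symm ?_)
  show ((d - s) * s ^ 2 * S ^ 2 - x ^ 2 * s * S ^ 2 - (d - s) * x ^ 2 * S ^ 2 +
      (d - s) ^ 2 * x ^ 2 * s) / (s ^ 3 * S ^ 3) = _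
  rw [div_eq_div_iff (by positivity) (by positivity)]
  field_simp
  ring

lemma one_le_s (x : ℝ) : 1 ≤ Real.sqrt (x ^ 2 + 1) := by
  have := Real.sq_sqrt (show (0:ℝ) ≤ x ^ 2 + 1 by positivity)
  nlinarith [Real.sqrt_nonneg (x ^ 2 + 1)]

lemma one_le_S (L x : ℝ) :
    1 ≤ Real.sqrt ((Real.sqrt (L ^ 2 / 4 + 1) - Real.sqrt (x ^ 2 + 1)) ^ 2 + 1) := by
  have := Real.sq_sqrt
    (show (0:ℝ) ≤ (Real.sqrt (L ^ 2 / 4 + 1) - Real.sqrt (x ^ 2 + 1)) ^ 2 + 1 by positivity)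
  nlinarith [Real.sqrt_nonneg ((Real.sqrt (L ^ 2 / 4 + 1) - Real.sqrt (x ^ 2 + 1)) ^ 2 + 1),
    sq_nonneg (Real.sqrt (L ^ 2 / 4 + 1) - Real.sqrt (x ^ 2 + 1))]

lemma abs_le_s (x : ℝ) : |x| ≤ Real.sqrt (x ^ 2 + 1) := by
  rw [← Real.sqrt_sq_eq_abs]
  exact Real.sqrt_le_sqrt (by linarith)

lemma abs_le_S (L x : ℝ) :
    |Real.sqrt (L ^ 2 / 4 + 1) - Real.sqrt (x ^ 2 + 1)| ≤
      Real.sqrt ((Real.sqrt (L ^ 2 / 4 + 1) - Real.sqrt (x ^ 2 + 1)) ^ 2 + 1) := by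
  rw [← Real.sqrt_sq_eq_abs]
  exact Real.sqrt_le_sqrt (by linarith)

lemma phi'_bound (L x : ℝ) : |phi' L x| ≤ 1 := by
  have hs := s_pos x
  have hS := S_pos L x
  unfold phi'
  rw [abs_div, abs_mul, div_le_one (by positivity), abs_of_pos (mul_pos hs hS)]
  have h1 := abs_le_s x
  have h2 := abs_le_S L x
  have := abs_nonneg (Real.sqrt (L ^ 2 / 4 + 1) - Real.sqrt (x ^ 2 + 1))
  have := abs_nonneg x
  nlinarith

lemma continuous_phi2 (L : ℝ) : Continuous (phi2 L) := by
  unfold phi2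
  apply Continuous.div
  · fun_prop
  · fun_prop
  · intro x
    have hs := s_pos x
    have hS := S_pos L x
    positivity

lemma phi2_bound (L : ℝ) {x : ℝ} (hx : x ^ 2 ≤ L ^ 2 / 4) : |phi2 L x| ≤ 2 := by
  have hs := s_pos x
  have hS := S_pos L x
  have h1 := one_le_s x
  have h2 := one_le_S L x
  set d := Real.sqrt (L ^ 2 / 4 + 1) with hd
  set s := Real.sqrt (x ^ 2 + 1) with hs'
  set S := Real.sqrt ((d - s) ^ 2 + 1) with hS'
  have hA : 0 ≤ d - s := by
    have : s ≤ d := Real.sqrt_le_sqrt (by linarith)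
    linarith
  have hAS : d - s ≤ S := le_trans (le_abs_self _) (abs_le_S L x)
  have hx2 : x ^ 2 ≤ s ^ 2 := by
    rw [hs', Real.sq_sqrt (by positivity)]; linarith
  have hA2 : (d - s) ^ 2 ≤ S ^ 2 := by
    rw [hS', Real.sq_sqrt (by positivity)]; linarith
  have k1 : d - s ≤ s * S := le_trans hAS (by nlinarith)
  have c1 : (d - s) * s ^ 2 * S ^ 2 ≤ s ^ 3 * S ^ 3 := by
    nlinarith [mul_le_mul_of_nonneg_right k1 (show (0:ℝ) ≤ s ^ 2 * S ^ 2 by positivity)]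
  have c2 : x ^ 2 * s * S ^ 2 ≤ s ^ 3 * S ^ 3 := by
    nlinarith [mul_le_mul_of_nonneg_right hx2 (show (0:ℝ) ≤ s * S ^ 2 by positivity),
      mul_le_mul_of_nonneg_left h2 (show (0:ℝ) ≤ s ^ 3 * S ^ 2 by positivity)]
  have c3 : (d - s) * x ^ 2 * S ^ 2 ≤ s ^ 3 * S ^ 3 := by
    nlinarith [mul_le_mul (hAS) hx2 (sq_nonneg x) (show (0:ℝ) ≤ S by linarith),
      mul_le_mul_of_nonneg_right (mul_le_mul hAS hx2 (sq_nonneg x) (show (0:ℝ) ≤ S by linarith))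
        (show (0:ℝ) ≤ S ^ 2 by positivity),
      mul_le_mul_of_nonneg_left h1 (show (0:ℝ) ≤ s ^ 2 * S ^ 3 by positivity)]
  have c4 : (d - s) ^ 2 * x ^ 2 * s ≤ s ^ 3 * S ^ 3 := by
    nlinarith [mul_le_mul_of_nonneg_right
        (mul_le_mul hA2 hx2 (sq_nonneg x) (sq_nonneg S)) hs.le,
      mul_le_mul_of_nonneg_left h2 (show (0:ℝ) ≤ s ^ 3 * S ^ 2 by positivity)]
  have n1 : 0 ≤ (d - s) * s ^ 2 * S ^ 2 := by positivity
  have n2 : 0 ≤ x ^ 2 * s * S ^ 2 := by positivity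
  have n3 : 0 ≤ (d - s) * x ^ 2 * S ^ 2 := by positivity
  have n4 : 0 ≤ (d - s) ^ 2 * x ^ 2 * s := by positivity
  show |((d - s) * s ^ 2 * S ^ 2 - x ^ 2 * s * S ^ 2 - (d - s) * x ^ 2 * S ^ 2 +
      (d - s) ^ 2 * x ^ 2 * s) / (s ^ 3 * S ^ 3)| ≤ 2
  rw [abs_div, div_le_iff₀ (by positivity), abs_of_pos (by positivity : (0:ℝ) < s ^ 3 * S ^ 3)]
  rw [abs_le]
  constructor <;> linarith

lemma absGlue {g g' g'' f : ℝ → ℝ} {δ : ℝ} (hδ : 0 < δ)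
    (h1 : ∀ t, HasDerivAt g (g' t) t) (h2 : ∀ t, HasDerivAt g' (g'' t) t)
    (hcont : Continuous g'') (h0 : g' 0 = 0)
    (hf : ∀ t, |t| < δ → f t = g |t|) :
    ContDiffAt ℝ 2 f 0 ∧ deriv f 0 = 0 ∧ deriv (deriv f) 0 = g'' 0 := by
  set F1 : ℝ → ℝ := fun t => if t < 0 then -g' (-t) else g' t with hF1
  have habs : Tendsto (fun t : ℝ => |t|) (𝓝[≠] (0:ℝ)) (𝓝[≠] (0:ℝ)) := by
    rw [tendsto_nhdsWithin_iff]
    constructor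
    · have := (continuous_abs.tendsto (0:ℝ))
      simpa using this.mono_left nhdsWithin_le_nhds
    · filter_upwards [self_mem_nhdsWithin] with t ht
      simpa using ht
  have hF10 : F1 0 = 0 := by simp [hF1, h0]
  have hF1at : ∀ t : ℝ, HasDerivAt F1 (g'' |t|) t := by
    intro t
    rcases lt_trichotomy t 0 with ht | ht | ht
    · have heq : F1 =ᶠ[𝓝 t] fun s => -g' (-s) := by
        filter_upwards [Iio_mem_nhds ht] with s hs
        simp only [hF1]
        rw [if_pos (show s < 0 from hs)]
      have hd : HasDerivAt (fun s : ℝ => -g' (-s)) (g'' (-t)) t := by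
        have := ((h2 (-t)).comp t (hasDerivAt_neg t)).neg
        exact this.congr_deriv (by ring)
      rw [abs_of_neg ht]
      exact hd.congr_of_eventuallyEq heq
    · subst ht
      have hg'0 : Tendsto (slope g' 0) (𝓝[≠] (0:ℝ)) (𝓝 (g'' 0)) :=
        hasDerivAt_iff_tendsto_slope.mp (h2 0)
      rw [hasDerivAt_iff_tendsto_slope]
      have hev : (slope g' 0) ∘ (fun t : ℝ => |t|) =ᶠ[𝓝[≠] (0:ℝ)] slope F1 0 := by
        filter_upwards [self_mem_nhdsWithin] with t ht
        have ht' : t ≠ 0 := ht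
        simp only [Function.comp_apply, slope_def_field, hF10, h0, sub_zero]
        rcases lt_or_gt_of_ne ht' with h | h
        · rw [abs_of_neg h, hF1]
          simp only [if_pos h]
          rw [div_neg, neg_div]
        · rw [abs_of_pos h, hF1]
          simp [not_lt.2 h.le]
      have := (hg'0.comp habs).congr' hev
      simpa using this
    · have heq : F1 =ᶠ[𝓝 t] g' := by
        filter_upwards [Ioi_mem_nhds ht] with s hs
        simp [hF1, not_lt.2 (le_of_lt (Set.mem_Ioi.mp hs))]
      rw [abs_of_pos ht]
      exact (h2 t).congr_of_eventuallyEq heq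
  have hfat : ∀ t ∈ Set.Ioo (-δ) δ, HasDerivAt f (F1 t) t := by
    intro t htm
    rcases lt_trichotomy t 0 with ht | ht | ht
    · have heq : f =ᶠ[𝓝 t] fun s => g (-s) := by
        filter_upwards [Ioo_mem_nhds htm.1 ht] with s hs
        rw [hf s (by rw [abs_of_neg hs.2]; linarith [hs.1]), abs_of_neg hs.2]
      have hd : HasDerivAt (fun s : ℝ => g (-s)) (g' (-t) * (-1)) t :=
        (h1 (-t)).comp t (hasDerivAt_neg t)
      have : F1 t = g' (-t) * (-1) := by simp [hF1, if_pos ht]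
      rw [this]
      exact hd.congr_of_eventuallyEq heq
    · subst ht
      rw [show F1 0 = 0 from hF10, hasDerivAt_iff_tendsto_slope]
      have hg0 : Tendsto (slope g 0) (𝓝[≠] (0:ℝ)) (𝓝 0) := by
        have := hasDerivAt_iff_tendsto_slope.mp (h1 0)
        rwa [h0] at this
      have ha : Tendsto (fun t : ℝ => |slope g 0 (|t|)|) (𝓝[≠] (0:ℝ)) (𝓝 0) := by
        have := (hg0.comp habs).abs
        simpa using this
      apply squeeze_zero_norm' _ ha
      have hIoo : Set.Ioo (-δ) δ ∈ 𝓝[≠] (0:ℝ) :=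
        nhdsWithin_le_nhds (Ioo_mem_nhds (by linarith) hδ)
      filter_upwards [self_mem_nhdsWithin, hIoo] with t ht htm'
      have ht' : t ≠ 0 := ht
      have hlt : |t| < δ := abs_lt.2 ⟨htm'.1, htm'.2⟩
      have hf0 : f 0 = g 0 := by simpa using hf 0 (by simpa using hδ)
      rw [slope_def_field, slope_def_field, hf t hlt, hf0, sub_zero, sub_zero]
      rw [Real.norm_eq_abs, abs_div, abs_div, abs_abs]
    · have heq : f =ᶠ[𝓝 t] g := by
        filter_upwards [Ioo_mem_nhds ht htm.2] with s hs
        rw [hf s (by rw [abs_of_pos hs.1]; exact hs.2), abs_of_pos hs.1]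
      have : F1 t = g' t := by simp [hF1, not_lt.2 ht.le]
      rw [this]
      exact (h1 t).congr_of_eventuallyEq heq
  have hU : Set.Ioo (-δ) δ ∈ 𝓝 (0:ℝ) := Ioo_mem_nhds (by linarith) hδ
  have hdf : Set.EqOn (deriv f) F1 (Set.Ioo (-δ) δ) := fun t ht => (hfat t ht).deriv
  have hdF1 : deriv F1 = fun t => g'' |t| := funext fun t => (hF1at t).deriv
  have hCD : ContDiffOn ℝ 2 f (Set.Ioo (-δ) δ) := by
    rw [show (2 : WithTop ℕ∞) = 1 + 1 from by norm_num,
      contDiffOn_succ_iff_deriv_of_isOpen isOpen_Ioo]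
    refine ⟨fun t ht => (hfat t ht).differentiableAt.differentiableWithinAt, by simp, ?_⟩
    apply ContDiffOn.congr _ hdf
    rw [show (1 : WithTop ℕ∞) = 0 + 1 from by norm_num,
      contDiffOn_succ_iff_deriv_of_isOpen isOpen_Ioo]
    refine ⟨fun t _ => (hF1at t).differentiableAt.differentiableWithinAt, by simp, ?_⟩
    rw [hdF1, contDiffOn_zero]
    exact ((hcont.comp continuous_abs).continuousOn)
  refine ⟨hCD.contDiffAt hU, ?_, ?_⟩
  · rw [(hfat 0 (by constructor <;> linarith)).deriv, hF10]
  · have hev : deriv f =ᶠ[𝓝 (0:ℝ)] F1 := eventuallyEq_of_mem hU hdf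
    rw [hev.deriv_eq, hdF1]
    simp

lemma contDiff_phi (L : ℝ) : ContDiff ℝ 2 (phi L) := by
  rw [show (2 : WithTop ℕ∞) = 1 + 1 from by norm_num, contDiff_succ_iff_deriv]
  refine ⟨fun x => (hasDerivAt_phi L x).differentiableAt, by simp, ?_⟩
  rw [show deriv (phi L) = phi' L from funext fun x => (hasDerivAt_phi L x).deriv]
  rw [show (1 : WithTop ℕ∞) = 0 + 1 from by norm_num, contDiff_succ_iff_deriv]
  refine ⟨fun x => (hasDerivAt_phi' L x).differentiableAt, by simp, ?_⟩
  rw [show deriv (phi' L) = phi2 L from funext fun x => (hasDerivAt_phi' L x).deriv]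
  rw [contDiff_zero]
  exact continuous_phi2 L

lemma phi_neg (L v : ℝ) : phi L (-v) = phi L v := by unfold phi; rw [neg_sq]

lemma phi_abs (L v : ℝ) : phi L (|v|) = phi L v := by
  rcases abs_choice v with h | h <;> rw [h]
  exact phi_neg L v

lemma dmol_eq_phi (L x : ℝ) : dmol L x = phi L (dtilde L x) := rfl

lemma dtilde_sub (L : ℝ) (k : ℤ) (z : ℝ) : dtilde L z = dtilde L (z - L * k) := by
  conv_lhs => rw [show z = (z - L * k) + L * k by ring]
  exact dtilde_shift L k (z - L * k)

lemma good_ev (L : ℝ) (hL : 0 < L) (k : ℤ) (x : ℝ) (hx : |x - L * k| < L / 2) :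
    dmol L =ᶠ[𝓝 x] fun z => phi L (z - L * k) := by
  have hopen : IsOpen {z : ℝ | |z - L * k| < L / 2} :=
    isOpen_lt (by continuity) continuous_const
  filter_upwards [hopen.mem_nhds hx] with z hz
  rw [dmol_eq_phi, dtilde_sub L k z, dtilde_eq_abs hL (le_of_lt hz), phi_abs]

lemma good_facts (L : ℝ) (hL : 0 < L) (k : ℤ) (x : ℝ) (hx : |x - L * k| < L / 2) :
    ContDiffAt ℝ 2 (dmol L) x ∧ deriv (dmol L) x = phi' L (x - L * k) ∧
      deriv (deriv (dmol L)) x = phi2 L (x - L * k) := by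
  have hev := good_ev L hL k x hx
  have hC : ContDiff ℝ 2 (fun z : ℝ => phi L (z - L * k)) :=
    (contDiff_phi L).comp (contDiff_id.sub contDiff_const)
  have hd1 : deriv (fun z : ℝ => phi L (z - L * k)) = fun z => phi' L (z - L * k) :=
    funext fun z => by rw [deriv_comp_sub_const]; exact (hasDerivAt_phi L _).deriv
  have hev1 : deriv (dmol L) =ᶠ[𝓝 x] fun z => phi' L (z - L * k) := by
    have := hev.deriv
    rwa [hd1] at this
  refine ⟨hC.contDiffAt.congr_of_eventuallyEq hev, ?_, ?_⟩
  · rw [hev.deriv_eq, hd1]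
  · rw [hev1.deriv_eq, deriv_comp_sub_const]
    exact (hasDerivAt_phi' L _).deriv

lemma phi'_neg_half (L : ℝ) : phi' L (0 - L / 2) = 0 := by
  unfold phi'
  rw [show (0 - L / 2) ^ 2 + 1 = L ^ 2 / 4 + 1 by ring]
  simp

lemma glue_facts (L : ℝ) (hL : 0 < L) (m : ℤ) :
    ContDiffAt ℝ 2 (dmol L) (L / 2 + L * m) ∧ deriv (dmol L) (L / 2 + L * m) = 0 ∧
      deriv (deriv (dmol L)) (L / 2 + L * m) = phi2 L (0 - L / 2) := by
  set y : ℝ := L / 2 + L * m with hy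
  have hf : ∀ t : ℝ, |t| < L / 2 → dmol L (y + t) = phi L (|t| - L / 2) := by
    intro t ht
    have habs := abs_lt.mp ht
    have h1 : dtilde L (y + t) = dtilde L (L / 2 + t) := by
      rw [show y + t = (L / 2 + t) + L * m by rw [hy]; ring]
      exact dtilde_shift L m _
    have h2 : dtilde L (y + t) = L / 2 - |t| := by
      rcases le_or_gt t 0 with h | h
      · rw [h1, dtilde_eq_abs hL (by rw [abs_of_nonneg (by linarith)]; linarith),
          abs_of_nonneg (by linarith), abs_of_nonpos h]
        ring
      · rw [h1, show L / 2 + t = (t - L / 2) + L * (1 : ℤ) by push_cast; ring,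
          dtilde_shift L 1 _, dtilde_eq_abs hL (by rw [abs_of_nonpos (by linarith)]; linarith),
          abs_of_nonpos (by linarith), abs_of_pos h]
        ring
    rw [dmol_eq_phi, h2, show L / 2 - |t| = -(|t| - L / 2) by ring, phi_neg]
  obtain ⟨hCD, hd0, hdd⟩ := absGlue (f := fun t => dmol L (y + t))
    (show (0:ℝ) < L / 2 by linarith)
    (fun t => HasDerivAt.comp_sub_const t (L / 2) (hasDerivAt_phi L (t - L / 2)))
    (fun t => HasDerivAt.comp_sub_const t (L / 2) (hasDerivAt_phi' L (t - L / 2)))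
    ((continuous_phi2 L).comp (by continuity))
    (phi'_neg_half L) hf
  have hrepr : dmol L = fun z => dmol L (y + (z - y)) := funext fun z => by
    congr 1; ring
  refine ⟨?_, ?_, ?_⟩
  · rw [hrepr]
    exact ContDiffAt.comp (g := fun t => dmol L (y + t)) (f := fun z : ℝ => z - y) y
      (by simpa using hCD) (contDiffAt_id.sub contDiffAt_const)
  · rw [hrepr]
    rw [deriv_comp_sub_const (fun t => dmol L (y + t)) y y, sub_self, hd0]
  · rw [hrepr]
    have h3 : deriv (fun z => dmol L (y + (z - y))) = fun z => deriv (fun t => dmol L (y + t)) (z - y) :=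
      funext fun z => deriv_comp_sub_const (fun t => dmol L (y + t)) y z
    rw [h3]
    rw [deriv_comp_sub_const (fun t => deriv (fun s => dmol L (y + s)) t) y y, sub_self]
    exact hdd


lemma point_cases (L : ℝ) (hL : 0 < L) (x : ℝ) :
    (∃ k : ℤ, |x - L * k| < L / 2) ∨ (∃ m : ℤ, x = L / 2 + L * m) := by
  set k := round (x / L) with hk
  have h := abs_sub_round (x / L)
  have hxk : |x - L * k| ≤ L / 2 := by
    have he : x - L * k = (x / L - k) * L := by field_simp
    rw [he, abs_mul, abs_of_pos hL]
    calc |x / L - (k : ℝ)| * L ≤ (1 / 2) * L := mul_le_mul_of_nonneg_right h hL.le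
      _ = L / 2 := by ring
  rcases lt_or_eq_of_le hxk with h' | h'
  · exact Or.inl ⟨k, h'⟩
  · rcases (abs_eq (show (0:ℝ) ≤ L / 2 by linarith)).mp h' with h2 | h2
    · exact Or.inr ⟨k, by linarith⟩
    · exact Or.inr ⟨k - 1, by push_cast; linarith⟩

lemma main_facts (L : ℝ) (hL : 0 < L) (x : ℝ) :
    ContDiffAt ℝ 2 (dmol L) x ∧ |deriv (dmol L) x| ≤ 1 ∧
      |deriv (deriv (dmol L)) x| ≤ 2 := by
  rcases point_cases L hL x with ⟨k, hk⟩ | ⟨m, hm⟩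
  · obtain ⟨hc, hd1, hd2⟩ := good_facts L hL k x hk
    refine ⟨hc, ?_, ?_⟩
    · rw [hd1]; exact phi'_bound L _
    · rw [hd2]
      apply phi2_bound
      have h1 : |x - L * k| ^ 2 ≤ (L / 2) ^ 2 := by
        apply pow_le_pow_left₀ (abs_nonneg _) hk.le
      rw [sq_abs] at h1
      nlinarith
  · subst hm
    obtain ⟨hc, hd1, hd2⟩ := glue_facts L hL m
    refine ⟨hc, ?_, ?_⟩
    · rw [hd1]; simp
    · rw [hd2]
      apply phi2_bound
      nlinarith

end AuxStmt0


/-- For `L ≥ 1`, the mollified periodic distance `x ↦ d_L(x,0)` is twice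
continuously differentiable, with `|∂ₓ d_L(x,0)| ≤ 1` and `|∂ₓ² d_L(x,0)| ≤ 2` for all `x`. -/
theorem stmt_0 (L : ℝ) (hL : 1 ≤ L) :
    ContDiff ℝ 2 (fun x => dmol L x) ∧
    (∀ x : ℝ, |deriv (fun x => dmol L x) x| ≤ 1) ∧
    (∀ x : ℝ, |deriv (deriv (fun x => dmol L x)) x| ≤ 2) := by
  have hL0 : 0 < L := by linarith
  refine ⟨contDiff_iff_contDiffAt.2 (fun x => (main_facts L hL0 x).1),
    fun x => (main_facts L hL0 x).2.1, fun x => (main_facts L hL0 x).2.2⟩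
end

section
/- Let L ≥ 1, N a positive integer, Δx = L/N ≤ 1, and let H = Δ + V act on L-periodic lattice functions on 𝒳 = {iΔx : i = 0,…,N−1}, where Δ = 𝒟⁺𝒟⁻ is the second-order finite difference Laplacian and V : 𝒳 → ℝ. Assume λ ∈ ℂ is such that (λ − H)⁻¹ exists and its operator norm on L²(𝒳) is bounded by a constant M. Then there exist constants γ₀ > 0 and C > 0, depending only on M, |λ|, and ‖V‖_{L^∞(𝒳)} (and in particular independent of L ≥ 1 and Δx ≤ 1), such that for all 0 < γ ≤ γ₀, sup_{y ∈ 𝒳} ‖ e^{γ d_L(·,y)} (λ − H)⁻¹ e^{−γ d_L(·,y)} ‖_{L²(𝒳) → L²(𝒳)} ≤ C, where e^{±γ d_L(·,y)} are the multiplication operators (e^{±γ d_L(·,y)} f)(x) = e^{±γ d_L(x,y)} f(x). -/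
open scoped BigOperators Real
open MeasureTheory

noncomputable section

private def nn {N : ℕ} [NeZero N] (f : ZMod N → ℂ) : ℝ :=
  Real.sqrt (∑ i : ZMod N, ‖f i‖ ^ 2)

private lemma nn_nonneg {N : ℕ} [NeZero N] (f : ZMod N → ℂ) : 0 ≤ nn f :=
  Real.sqrt_nonneg _

private lemma nn_sq {N : ℕ} [NeZero N] (f : ZMod N → ℂ) :
    nn f ^ 2 = ∑ i : ZMod N, ‖f i‖ ^ 2 :=
  Real.sq_sqrt (Finset.sum_nonneg fun i _ => by positivity)

private lemma sum_shift {N : ℕ} [NeZero N] {M : Type*} [AddCommMonoid M] (F : ZMod N → M) :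
    ∑ i : ZMod N, F (i + 1) = ∑ i : ZMod N, F i :=
  Fintype.sum_equiv (Equiv.addRight 1) _ _ (fun _ => rfl)

private lemma nn_congr {N : ℕ} [NeZero N] (f g : ZMod N → ℂ)
    (h : ∀ i, ‖f i‖ = ‖g i‖) : nn f = nn g := by
  unfold nn; congr 1; exact Finset.sum_congr rfl fun i _ => by rw [h]

private lemma nn_shift {N : ℕ} [NeZero N] (f : ZMod N → ℂ) :
    nn (fun i => f (i + 1)) = nn f := by
  unfold nn; congr 1; exact sum_shift (fun i => ‖f i‖ ^ 2)

private lemma cs {N : ℕ} [NeZero N] (u v : ZMod N → ℂ) :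
    ∑ i : ZMod N, ‖u i‖ * ‖v i‖ ≤ nn u * nn v := by
  simpa [nn] using Real.sum_mul_le_sqrt_mul_sqrt Finset.univ (fun i => ‖u i‖) (fun i => ‖v i‖)

private lemma cs' {N : ℕ} [NeZero N] (u v : ZMod N → ℂ) :
    ‖∑ i : ZMod N, (starRingEnd ℂ) (u i) * v i‖ ≤ nn u * nn v := by
  refine le_trans (norm_sum_le _ _) ?_
  refine le_trans (le_of_eq (Finset.sum_congr rfl fun i _ => ?_)) (cs u v)
  rw [norm_mul, RCLike.norm_conj]

private lemma csw {N : ℕ} [NeZero N] (c : ZMod N → ℝ) (u v : ZMod N → ℂ) (B : ℝ)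
    (hB : 0 ≤ B) (hc : ∀ i, |c i| ≤ B) :
    ‖∑ i : ZMod N, (c i : ℂ) * u i * v i‖ ≤ B * (nn u * nn v) := by
  refine le_trans (norm_sum_le _ _) ?_
  have h1 : ∀ i : ZMod N, ‖(c i : ℂ) * u i * v i‖ ≤ B * (‖u i‖ * ‖v i‖) := by
    intro i
    rw [norm_mul, norm_mul, Complex.norm_real, Real.norm_eq_abs, mul_assoc]
    exact mul_le_mul_of_nonneg_right (hc i) (by positivity)
  refine le_trans (Finset.sum_le_sum fun i _ => h1 i) ?_
  rw [← Finset.mul_sum]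
  exact mul_le_mul_of_nonneg_left (cs u v) hB

private lemma nn_triangle {N : ℕ} [NeZero N] (f g : ZMod N → ℂ) :
    nn (fun i => f i + g i) ≤ nn f + nn g := by
  have h1 : ∑ i : ZMod N, ‖f i + g i‖ ^ 2 ≤ (nn f + nn g) ^ 2 := by
    have h2 : ∀ i : ZMod N, ‖f i + g i‖ ^ 2 ≤ ‖f i‖ ^ 2 + 2 * (‖f i‖ * ‖g i‖) + ‖g i‖ ^ 2 := by
      intro i
      have := norm_add_le (f i) (g i)
      nlinarith [norm_nonneg (f i), norm_nonneg (g i), norm_nonneg (f i + g i)]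
    refine le_trans (Finset.sum_le_sum fun i _ => h2 i) ?_
    rw [Finset.sum_add_distrib, Finset.sum_add_distrib, ← Finset.mul_sum]
    have := cs f g
    nlinarith [nn_sq f, nn_sq g, nn_nonneg f, nn_nonneg g]
  calc nn (fun i => f i + g i) = Real.sqrt (∑ i : ZMod N, ‖f i + g i‖ ^ 2) := rfl
    _ ≤ Real.sqrt ((nn f + nn g) ^ 2) := Real.sqrt_le_sqrt h1
    _ = nn f + nn g := Real.sqrt_sq (add_nonneg (nn_nonneg f) (nn_nonneg g))

private lemma wnorm_eq {N : ℕ} [NeZero N] (w : ℝ) (hw : 0 ≤ w) (f : ZMod N → ℂ) :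
    wnorm w f = Real.sqrt w * nn f := by
  rw [wnorm, nn, ← Real.sqrt_mul hw]

private lemma discLap_eq {N : ℕ} (h : ℝ) (hh : h ≠ 0) (u : ZMod N → ℂ) (i : ZMod N) :
    discLap h u i = (u (i + 1) - 2 * u i + u (i - 1)) / (h : ℂ) ^ 2 := by
  have hc : (h : ℂ) ≠ 0 := Complex.ofReal_ne_zero.mpr hh
  simp only [discLap, Dplus, Dminus, add_sub_cancel_right]
  field_simp
  ring

private lemma conj_discLap {N : ℕ} (h : ℝ) (u : ZMod N → ℂ) (i : ZMod N) :
    (starRingEnd ℂ) (discLap h u i) = discLap h (fun j => (starRingEnd ℂ) (u j)) i := by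
  simp [discLap, Dplus, Dminus, map_div₀, map_sub, Complex.conj_ofReal]

private lemma dplus_shift {N : ℕ} [NeZero N] (h : ℝ) (u : ZMod N → ℂ) (i : ZMod N) :
    Dplus h u i = Dminus h u (i + 1) := by
  simp [Dplus, Dminus, add_sub_cancel_right]

private lemma nn_dplus {N : ℕ} [NeZero N] (h : ℝ) (u : ZMod N → ℂ) :
    nn (Dplus h u) = nn (Dminus h u) := by
  have : nn (Dplus h u) = nn (fun i => Dminus h u (i + 1)) :=
    nn_congr _ _ (fun i => by rw [dplus_shift])
  rw [this, nn_shift]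

end

noncomputable section

private lemma conj_mul_self (z : ℂ) : (starRingEnd ℂ) z * z = ((‖z‖ ^ 2 : ℝ) : ℂ) := by
  rw [mul_comm, Complex.mul_conj]
  norm_cast
  simp [Complex.normSq_eq_norm_sq]

private lemma lap_sum {N : ℕ} [NeZero N] (h : ℝ) (hh : h ≠ 0) (g : ZMod N → ℂ) :
    ∑ i : ZMod N, (starRingEnd ℂ) (g i) * discLap h g i
      = -(((∑ i : ZMod N, ‖Dminus h g i‖ ^ 2 : ℝ)) : ℂ) := by
  have hc : (h : ℂ) ≠ 0 := Complex.ofReal_ne_zero.mpr hh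
  have key : ∀ i : ZMod N, (starRingEnd ℂ) (g i) * discLap h g i
      = (starRingEnd ℂ) (g i) * Dminus h g (i + 1) / h
        - (starRingEnd ℂ) (g i) * Dminus h g i / h := by
    intro i
    simp only [discLap, Dplus]
    field_simp
  rw [Finset.sum_congr rfl fun i _ => key i, Finset.sum_sub_distrib]
  have shift : ∑ i : ZMod N, (starRingEnd ℂ) (g i) * Dminus h g (i + 1) / h
      = ∑ i : ZMod N, (starRingEnd ℂ) (g (i - 1)) * Dminus h g i / h := by
    rw [← sum_shift (fun i => (starRingEnd ℂ) (g (i - 1)) * Dminus h g i / h)]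
    simp [add_sub_cancel_right]
  rw [shift, ← Finset.sum_sub_distrib]
  have key2 : ∀ i : ZMod N, (starRingEnd ℂ) (g (i - 1)) * Dminus h g i / h
      - (starRingEnd ℂ) (g i) * Dminus h g i / h
      = -(((‖Dminus h g i‖ ^ 2 : ℝ)) : ℂ) := by
    intro i
    have e1 : (starRingEnd ℂ) (g (i-1)) * Dminus h g i / h - (starRingEnd ℂ) (g i) * Dminus h g i / h
        = -((starRingEnd ℂ) ((g i - g (i-1)) / h) * Dminus h g i) := by
      rw [map_div₀, map_sub, Complex.conj_ofReal]
      field_simp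
      ring
    rw [e1, show (g i - g (i-1)) / (h:ℂ) = Dminus h g i from rfl, conj_mul_self]
  rw [Finset.sum_congr rfl fun i _ => key2 i]
  push_cast
  rw [← Finset.sum_neg_distrib]

private lemma lap_sym {N : ℕ} [NeZero N] (h : ℝ) (hh : h ≠ 0) (u v : ZMod N → ℂ) :
    ∑ i : ZMod N, u i * discLap h v i = ∑ i : ZMod N, discLap h u i * v i := by
  have hc : (h : ℂ) ≠ 0 := Complex.ofReal_ne_zero.mpr hh
  have e1 : ∀ i : ZMod N, u i * discLap h v i
      = u i * v (i+1) / (h:ℂ)^2 - 2 * (u i * v i) / (h:ℂ)^2 + u i * v (i-1) / (h:ℂ)^2 := by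
    intro i; rw [discLap_eq h hh]; field_simp
  have e2 : ∀ i : ZMod N, discLap h u i * v i
      = u (i+1) * v i / (h:ℂ)^2 - 2 * (u i * v i) / (h:ℂ)^2 + u (i-1) * v i / (h:ℂ)^2 := by
    intro i; rw [discLap_eq h hh]; field_simp
  rw [Finset.sum_congr rfl fun i _ => e1 i, Finset.sum_congr rfl fun i _ => e2 i]
  rw [Finset.sum_add_distrib, Finset.sum_add_distrib, Finset.sum_sub_distrib,
    Finset.sum_sub_distrib]
  have s1 : ∑ i : ZMod N, u i * v (i+1) / (h:ℂ)^2
      = ∑ i : ZMod N, u (i-1) * v i / (h:ℂ)^2 := by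
    rw [← sum_shift (fun i => u (i-1) * v i / (h:ℂ)^2)]
    simp [add_sub_cancel_right]
  have s2 : ∑ i : ZMod N, u i * v (i-1) / (h:ℂ)^2
      = ∑ i : ZMod N, u (i+1) * v i / (h:ℂ)^2 := by
    rw [← sum_shift (fun i => u i * v (i-1) / (h:ℂ)^2)]
    simp [add_sub_cancel_right]
  rw [s1, s2]
  ring

end

noncomputable section

private lemma energy {N : ℕ} [NeZero N] (h : ℝ) (hh : h ≠ 0) (V : ZMod N → ℝ) (W₁ : ℝ)
    (hV : ∀ i, |V i| ≤ W₁) (lam' : ℂ) (Λ₁ : ℝ) (hlam : ‖lam'‖ ≤ Λ₁)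
    (g r : ZMod N → ℂ)
    (heq : ∀ i, lam' * g i - (discLap h g i + (V i : ℂ) * g i) = r i) :
    nn (Dminus h g) ^ 2 ≤ (Λ₁ + W₁) * nn g ^ 2
      + ‖∑ i : ZMod N, (starRingEnd ℂ) (g i) * r i‖ := by
  set S : ℂ := ∑ i : ZMod N, (starRingEnd ℂ) (g i) * r i with hS
  set SG : ℝ := ∑ i : ZMod N, ‖g i‖ ^ 2 with hSG
  set SD : ℝ := ∑ i : ZMod N, ‖Dminus h g i‖ ^ 2 with hSD
  set SV : ℝ := ∑ i : ZMod N, V i * ‖g i‖ ^ 2 with hSV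
  have hexp : S = lam' * (SG : ℂ) + (SD : ℂ) - (SV : ℂ) := by
    have e1 : S = ∑ i : ZMod N, (lam' * ((starRingEnd ℂ) (g i) * g i)
        - (starRingEnd ℂ) (g i) * discLap h g i
        - (V i : ℂ) * ((starRingEnd ℂ) (g i) * g i)) := by
      rw [hS]
      refine Finset.sum_congr rfl fun i _ => ?_
      rw [← heq i]; ring
    rw [e1, Finset.sum_sub_distrib, Finset.sum_sub_distrib]
    have e2 : ∑ i : ZMod N, lam' * ((starRingEnd ℂ) (g i) * g i) = lam' * (SG : ℂ) := by
      rw [← Finset.mul_sum]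
      congr 1
      rw [Finset.sum_congr rfl fun i _ => conj_mul_self (g i), hSG]
      push_cast
      rfl
    have e4 : ∑ i : ZMod N, (V i : ℂ) * ((starRingEnd ℂ) (g i) * g i) = (SV : ℂ) := by
      rw [Finset.sum_congr rfl fun (i : ZMod N) _ =>
        (by rw [conj_mul_self]; push_cast; ring :
          (V i : ℂ) * ((starRingEnd ℂ) (g i) * g i) = ((V i * ‖g i‖ ^ 2 : ℝ) : ℂ))]
      rw [hSV]
      push_cast
      rfl
    rw [e2, e4, lap_sum h hh g, ← hSD]
    ring
  have hre : SD = S.re - lam'.re * SG + SV := by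
    have := congrArg Complex.re hexp
    simp only [Complex.add_re, Complex.sub_re, Complex.mul_re, Complex.ofReal_re,
      Complex.ofReal_im, mul_zero, sub_zero] at this
    linarith
  have hSGnn : 0 ≤ SG := Finset.sum_nonneg fun i _ => by positivity
  have h1 : S.re ≤ ‖S‖ := by
    exact Complex.re_le_norm S
  have h2 : -lam'.re * SG ≤ Λ₁ * SG := by
    have : -lam'.re ≤ Λ₁ := by
      have := Complex.abs_re_le_norm lam'
      have := neg_abs_le lam'.re
      linarith
    exact mul_le_mul_of_nonneg_right this hSGnn
  have h3 : SV ≤ W₁ * SG := by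
    rw [hSV, hSG, Finset.mul_sum]
    refine Finset.sum_le_sum fun i _ => ?_
    exact mul_le_mul_of_nonneg_right (le_of_abs_le (hV i)) (by positivity)
  rw [nn_sq, nn_sq, ← hSD, ← hSG]
  nlinarith

end

noncomputable section

private lemma dtilde_le (L x : ℝ) (k : ℤ) : dtilde L x ≤ |x - L * k| :=
  csInf_le ⟨0, fun r ⟨m, hm⟩ => hm ▸ abs_nonneg _⟩ ⟨k, rfl⟩

private lemma dtilde_lip_one (L x y : ℝ) : dtilde L x ≤ dtilde L y + |x - y| := by
  have h : dtilde L x - |x - y| ≤ dtilde L y := by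
    refine le_csInf ⟨|y - L * (0:ℤ)|, 0, rfl⟩ ?_
    rintro b ⟨k, hk⟩
    have h1 : dtilde L x ≤ |x - L * k| := dtilde_le L x k
    have h2 : |x - L * k| ≤ |y - L * k| + |x - y| := by
      calc |x - L * k| = |(y - L * k) + (x - y)| := by ring_nf
        _ ≤ |y - L * k| + |x - y| := abs_add_le _ _
    rw [hk]; linarith
  linarith

private lemma dtilde_lip (L x y : ℝ) : |dtilde L x - dtilde L y| ≤ |x - y| := by
  rw [abs_sub_le_iff]
  constructor
  · have := dtilde_lip_one L x y; linarith
  · have := dtilde_lip_one L y x; rw [abs_sub_comm] at this; linarith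

private lemma dtilde_periodic (L x : ℝ) : dtilde L (x + L) = dtilde L x := by
  unfold dtilde
  congr 1
  ext r
  constructor
  · rintro ⟨k, hk⟩
    exact ⟨k - 1, by rw [hk]; congr 1; push_cast; ring⟩
  · rintro ⟨k, hk⟩
    exact ⟨k + 1, by rw [hk]; congr 1; push_cast; ring⟩

private lemma sqrt_lip_one (a b : ℝ) :
    Real.sqrt (a ^ 2 + 1) ≤ Real.sqrt (b ^ 2 + 1) + |a - b| := by
  have ha := Real.sq_sqrt (show (0:ℝ) ≤ a ^ 2 + 1 by positivity)
  have hb := Real.sq_sqrt (show (0:ℝ) ≤ b ^ 2 + 1 by positivity)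
  have h1 : |b| ≤ Real.sqrt (b ^ 2 + 1) := by
    rw [← Real.sqrt_sq_eq_abs]
    exact Real.sqrt_le_sqrt (by linarith)
  have h2 : |a| ≤ |b| + |a - b| := by
    calc |a| = |b + (a - b)| := by ring_nf
      _ ≤ |b| + |a - b| := abs_add_le _ _
  nlinarith [Real.sqrt_nonneg (a ^ 2 + 1), Real.sqrt_nonneg (b ^ 2 + 1),
    abs_nonneg (a - b), abs_nonneg b, abs_nonneg a, sq_abs a, sq_abs b, sq_abs (a - b)]

private lemma sqrt_lip (a b : ℝ) :
    |Real.sqrt (a ^ 2 + 1) - Real.sqrt (b ^ 2 + 1)| ≤ |a - b| := by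
  rw [abs_sub_le_iff]
  constructor
  · have := sqrt_lip_one a b; linarith
  · have := sqrt_lip_one b a; rw [abs_sub_comm] at this; linarith

private lemma dmol_lip (L x y : ℝ) : |dmol L x - dmol L y| ≤ |x - y| := by
  unfold dmol
  set D := Real.sqrt (L ^ 2 / 4 + 1) with hD
  set qx := Real.sqrt (dtilde L x ^ 2 + 1) with hqx
  set qy := Real.sqrt (dtilde L y ^ 2 + 1) with hqy
  have e1 : D - Real.sqrt ((D - qx) ^ 2 + 1) - (D - Real.sqrt ((D - qy) ^ 2 + 1))
      = Real.sqrt ((D - qy) ^ 2 + 1) - Real.sqrt ((D - qx) ^ 2 + 1) := by ring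
  rw [e1]
  calc |Real.sqrt ((D - qy) ^ 2 + 1) - Real.sqrt ((D - qx) ^ 2 + 1)|
      ≤ |(D - qy) - (D - qx)| := sqrt_lip _ _
    _ = |qx - qy| := by rw [show (D - qy) - (D - qx) = qx - qy by ring]
    _ ≤ |dtilde L x - dtilde L y| := sqrt_lip _ _
    _ ≤ |x - y| := dtilde_lip L x y

private lemma dmol_periodic (L x : ℝ) : dmol L (x + L) = dmol L x := by
  unfold dmol
  rw [dtilde_periodic]

private lemma grid_step (L : ℝ) (N : ℕ) [NeZero N] (i : ZMod N) :
    gridX L N (i + 1) = gridX L N i + L / N ∨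
      gridX L N (i + 1) = gridX L N i + L / N - L := by
  have hN : 0 < N := Nat.pos_of_ne_zero (NeZero.ne N)
  have hNR : (N : ℝ) ≠ 0 := Nat.cast_ne_zero.mpr (NeZero.ne N)
  have hval : (i + 1).val = (i.val + 1) % N := by
    rw [ZMod.val_add, ZMod.val_one_eq_one_mod, Nat.add_mod_mod]
  have hvi : i.val < N := ZMod.val_lt i
  rcases lt_or_ge (i.val + 1) N with hlt | hge
  · left
    unfold gridX
    rw [hval, Nat.mod_eq_of_lt hlt]
    push_cast
    ring
  · right
    have hiv : i.val = N - 1 := by omega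
    have hv0 : (i + 1).val = 0 := by
      rw [hval, show i.val + 1 = N by omega, Nat.mod_self]
    unfold gridX
    rw [hv0, hiv]
    have : ((N - 1 : ℕ) : ℝ) = (N : ℝ) - 1 := by
      push_cast [Nat.cast_sub (by omega : 1 ≤ N)]; ring
    rw [this]
    field_simp
    ring

private lemma dstep (L : ℝ) (hL : 0 < L) (N : ℕ) [NeZero N] (y i : ZMod N) :
    |dL L (gridX L N (i + 1)) (gridX L N y) - dL L (gridX L N i) (gridX L N y)| ≤ L / N := by
  have hh : (0:ℝ) ≤ L / N := by positivity
  unfold dL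
  rcases grid_step L N i with hgs | hgs
  · rw [hgs]
    have := dmol_lip L (gridX L N i + L / N - gridX L N y) (gridX L N i - gridX L N y)
    rw [show gridX L N i + L / N - gridX L N y - (gridX L N i - gridX L N y) = L / N by ring,
      abs_of_nonneg hh] at this
    exact this
  · rw [hgs]
    have hper : dmol L (gridX L N i + L / N - L - gridX L N y)
        = dmol L (gridX L N i + L / N - gridX L N y) := by
      rw [show gridX L N i + L / N - gridX L N y
          = (gridX L N i + L / N - L - gridX L N y) + L by ring]
      rw [dmol_periodic]
    rw [hper]
    have := dmol_lip L (gridX L N i + L / N - gridX L N y) (gridX L N i - gridX L N y)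
    rw [show gridX L N i + L / N - gridX L N y - (gridX L N i - gridX L N y) = L / N by ring,
      abs_of_nonneg hh] at this
    exact this

end

noncomputable section

private lemma pairB {N : ℕ} [NeZero N] (h γ : ℝ) (hh : 0 < h) (hh1 : h ≤ 1)
    (hγ : 0 < γ) (hγ1 : γ ≤ 1) (d : ZMod N → ℝ)
    (hstep : ∀ i, |d (i + 1) - d i| ≤ h)
    (ψ g p : ZMod N → ℂ)
    (hp : ∀ i, (h : ℂ) * p i
      = (((Real.exp (γ * (d i - d (i + 1))) - 1) / h : ℝ) : ℂ) * g (i + 1)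
        + (((Real.exp (γ * (d i - d (i - 1))) - 1) / h : ℝ) : ℂ) * g (i - 1)) :
    ‖∑ i : ZMod N, (starRingEnd ℂ) (ψ i) * p i‖
      ≤ 2 * γ * (nn ψ * nn (Dplus h g)) + 2 * γ * (nn (Dplus h ψ) * nn g)
        + 2 * γ ^ 2 * (nn ψ * nn g) := by
  have hc : (h : ℂ) ≠ 0 := Complex.ofReal_ne_zero.mpr (ne_of_gt hh)
  set α : ZMod N → ℝ := fun i => (Real.exp (γ * (d i - d (i + 1))) - 1) / h with hα
  set β : ZMod N → ℝ := fun i => (Real.exp (γ * (d i - d (i - 1))) - 1) / h with hβ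
  -- bounds
  have hsb : ∀ i : ZMod N, |γ * (d i - d (i + 1))| ≤ γ * h := by
    intro i
    rw [abs_mul, abs_of_pos hγ]
    refine mul_le_mul_of_nonneg_left ?_ (le_of_lt hγ)
    rw [abs_sub_comm]; exact hstep i
  have hsb1 : ∀ i : ZMod N, |γ * (d i - d (i + 1))| ≤ 1 := fun i =>
    le_trans (hsb i) (by nlinarith)
  have hαb : ∀ i : ZMod N, |α i| ≤ 2 * γ := by
    intro i
    rw [hα]
    simp only
    rw [abs_div, abs_of_pos hh, div_le_iff₀ hh]
    calc |Real.exp (γ * (d i - d (i + 1))) - 1| ≤ 2 * |γ * (d i - d (i + 1))| :=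
        Real.abs_exp_sub_one_le (hsb1 i)
      _ ≤ 2 * (γ * h) := by have := hsb i; linarith
      _ = 2 * γ * h := by ring
  have hβc : ∀ i : ZMod N, β (i + 1) = (Real.exp (-(γ * (d i - d (i + 1)))) - 1) / h := by
    intro i
    rw [hβ]
    simp only [add_sub_cancel_right]
    ring_nf
  have hab : ∀ i : ZMod N, |α i + β (i + 1)| ≤ 2 * γ ^ 2 * h := by
    intro i
    rw [hβc i, hα]
    simp only
    set s := γ * (d i - d (i + 1)) with hs
    have e : (Real.exp s - 1) / h + (Real.exp (-s) - 1) / h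
        = ((Real.exp s - 1 - s) + (Real.exp (-s) - 1 - (-s))) / h := by ring
    rw [e, abs_div, abs_of_pos hh, div_le_iff₀ hh]
    have b1 : |Real.exp s - 1 - s| ≤ s ^ 2 := Real.abs_exp_sub_one_sub_id_le (hsb1 i)
    have b2 : |Real.exp (-s) - 1 - (-s)| ≤ (-s) ^ 2 := by
      refine Real.abs_exp_sub_one_sub_id_le ?_
      rw [abs_neg]; exact hsb1 i
    have b3 : s ^ 2 ≤ (γ * h) ^ 2 := by
      have := hsb i
      have := abs_nonneg s
      nlinarith [sq_abs s]
    calc |Real.exp s - 1 - s + (Real.exp (-s) - 1 - -s)|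
        ≤ |Real.exp s - 1 - s| + |Real.exp (-s) - 1 - -s| := abs_add_le _ _
      _ ≤ s ^ 2 + (-s) ^ 2 := by linarith [b1, b2]
      _ ≤ 2 * (γ * h) ^ 2 := by nlinarith
      _ ≤ 2 * γ ^ 2 * h * h := by nlinarith [hγ.le, hh.le]
  -- decomposition
  have hp' : ∀ i : ZMod N, (starRingEnd ℂ) (ψ i) * p i
      = ((α i : ℝ) : ℂ) * (starRingEnd ℂ) (ψ i) * g (i + 1) / h
        + ((β i : ℝ) : ℂ) * (starRingEnd ℂ) (ψ i) * g (i - 1) / h := by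
    intro i
    have h0 := hp i
    simp only [hα, hβ]
    have h1 : p i = ((((Real.exp (γ * (d i - d (i + 1))) - 1) / h : ℝ) : ℂ) * g (i + 1)
        + (((Real.exp (γ * (d i - d (i - 1))) - 1) / h : ℝ) : ℂ) * g (i - 1)) / (h : ℂ) := by
      rw [eq_div_iff hc]
      linear_combination h0
    rw [h1]
    ring
  rw [Finset.sum_congr rfl fun i _ => hp' i, Finset.sum_add_distrib]
  have hshiftβ : ∑ i : ZMod N, ((β i : ℝ) : ℂ) * (starRingEnd ℂ) (ψ i) * g (i - 1) / h
      = ∑ i : ZMod N, ((β (i + 1) : ℝ) : ℂ) * (starRingEnd ℂ) (ψ (i + 1)) * g i / h := by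
    rw [← sum_shift (fun i => ((β i : ℝ) : ℂ) * (starRingEnd ℂ) (ψ i) * g (i - 1) / h)]
    refine Finset.sum_congr rfl fun i _ => ?_
    rw [add_sub_cancel_right]
  rw [hshiftβ]
  have hsplit : ∑ i : ZMod N, ((α i : ℝ) : ℂ) * (starRingEnd ℂ) (ψ i) * g (i + 1) / h
      + ∑ i : ZMod N, ((β (i + 1) : ℝ) : ℂ) * (starRingEnd ℂ) (ψ (i + 1)) * g i / h
      = (∑ i : ZMod N, ((α i : ℝ) : ℂ) * (starRingEnd ℂ) (ψ i) * Dplus h g i)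
        - (∑ i : ZMod N, ((α i : ℝ) : ℂ) * (starRingEnd ℂ) (Dplus h ψ i) * g i)
        + (∑ i : ZMod N, (((α i + β (i + 1)) / h : ℝ) : ℂ)
            * (starRingEnd ℂ) (ψ (i + 1)) * g i) := by
    rw [← Finset.sum_add_distrib, ← Finset.sum_sub_distrib, ← Finset.sum_add_distrib]
    refine Finset.sum_congr rfl fun i _ => ?_
    simp only [Dplus, map_div₀, map_sub, Complex.conj_ofReal]
    push_cast
    field_simp
    ring
  rw [hsplit]
  have hB1 : ‖∑ i : ZMod N, ((α i : ℝ) : ℂ) * (starRingEnd ℂ) (ψ i) * Dplus h g i‖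
      ≤ 2 * γ * (nn ψ * nn (Dplus h g)) := by
    have := csw α (fun i => (starRingEnd ℂ) (ψ i)) (Dplus h g) (2 * γ) (by positivity) hαb
    rwa [nn_congr (fun i => (starRingEnd ℂ) (ψ i)) ψ (fun i => RCLike.norm_conj _)] at this
  have hB2 : ‖∑ i : ZMod N, ((α i : ℝ) : ℂ) * (starRingEnd ℂ) (Dplus h ψ i) * g i‖
      ≤ 2 * γ * (nn (Dplus h ψ) * nn g) := by
    have := csw α (fun i => (starRingEnd ℂ) (Dplus h ψ i)) g (2 * γ) (by positivity) hαb
    rwa [nn_congr (fun i => (starRingEnd ℂ) (Dplus h ψ i)) (Dplus h ψ)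
      (fun i => RCLike.norm_conj _)] at this
  have hB3 : ‖∑ i : ZMod N, (((α i + β (i + 1)) / h : ℝ) : ℂ)
      * (starRingEnd ℂ) (ψ (i + 1)) * g i‖ ≤ 2 * γ ^ 2 * (nn ψ * nn g) := by
    have hcb : ∀ i : ZMod N, |(α i + β (i + 1)) / h| ≤ 2 * γ ^ 2 := by
      intro i
      rw [abs_div, abs_of_pos hh, div_le_iff₀ hh]
      exact hab i
    have := csw (fun i => (α i + β (i + 1)) / h)
      (fun i => (starRingEnd ℂ) (ψ (i + 1))) g (2 * γ ^ 2) (by positivity) hcb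
    rwa [nn_congr (fun i => (starRingEnd ℂ) (ψ (i + 1))) (fun i => ψ (i + 1))
      (fun i => RCLike.norm_conj _), nn_shift] at this
  set T1 := ∑ i : ZMod N, ((α i : ℝ) : ℂ) * (starRingEnd ℂ) (ψ i) * Dplus h g i with hT1
  set T2 := ∑ i : ZMod N, ((α i : ℝ) : ℂ) * (starRingEnd ℂ) (Dplus h ψ i) * g i with hT2
  set T3 := ∑ i : ZMod N, (((α i + β (i + 1)) / h : ℝ) : ℂ)
      * (starRingEnd ℂ) (ψ (i + 1)) * g i with hT3
  calc ‖T1 - T2 + T3‖ ≤ ‖T1 - T2‖ + ‖T3‖ := norm_add_le _ _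
    _ ≤ ‖T1‖ + ‖T2‖ + ‖T3‖ := by linarith [norm_sub_le T1 T2]
    _ ≤ 2 * γ * (nn ψ * nn (Dplus h g)) + 2 * γ * (nn (Dplus h ψ) * nn g)
        + 2 * γ ^ 2 * (nn ψ * nn g) := by linarith [hB1, hB2, hB3]

end

noncomputable section
set_option maxHeartbeats 4000000

private lemma exp_split (γ a b : ℝ) :
    ((Real.exp (γ * a) : ℝ) : ℂ)
      = ((Real.exp (γ * (a - b)) : ℝ) : ℂ) * ((Real.exp (γ * b) : ℝ) : ℂ) := by
  rw [← Complex.ofReal_mul, ← Real.exp_add]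
  congr 2
  ring

private lemma main_aux {N : ℕ} [NeZero N] (h γ M₁ Λ₁ W₁ : ℝ)
    (hh : 0 < h) (hh1 : h ≤ 1) (hγ : 0 < γ) (hγ1 : γ ≤ 1)
    (hM₁ : 0 ≤ M₁) (hW : 0 ≤ W₁) (hΛ : 0 ≤ Λ₁)
    (V : ZMod N → ℝ) (hV : ∀ i, |V i| ≤ W₁)
    (lam : ℂ) (hlam : ‖lam‖ ≤ Λ₁)
    (G : (ZMod N → ℂ) → (ZMod N → ℂ))
    (hG1 : ∀ f, G (fun i => lam * f i - (discLap h f i + (V i : ℂ) * f i)) = f)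
    (hG2 : ∀ f, (fun i => lam * G f i - (discLap h (G f) i + (V i : ℂ) * G f i)) = f)
    (hGn : ∀ u, nn (G u) ≤ M₁ * nn u)
    (d : ZMod N → ℝ) (hd : ∀ i, |d (i + 1) - d i| ≤ h)
    (hγsmall : γ * (2 * (M₁ * Real.sqrt (2 * Λ₁ + 2 * W₁ + 21)
        + Real.sqrt ((Λ₁ + W₁) * M₁ ^ 2 + M₁) + M₁)) ≤ 1 / 2)
    (f : ZMod N → ℂ) :
    nn (fun i => ((Real.exp (γ * d i) : ℝ) : ℂ)
        * G (fun j => ((Real.exp (-γ * d j) : ℝ) : ℂ) * f j) i)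
      ≤ (2 * M₁ + 1) * nn f := by
  have hc : (h : ℂ) ≠ 0 := Complex.ofReal_ne_zero.mpr (ne_of_gt hh)
  set E := Real.sqrt ((Λ₁ + W₁) * M₁ ^ 2 + M₁) with hE
  set A := Real.sqrt (2 * Λ₁ + 2 * W₁ + 21) with hA
  have hEnn : 0 ≤ E := Real.sqrt_nonneg _
  have hAnn : 0 ≤ A := Real.sqrt_nonneg _
  have hE2 : E ^ 2 = (Λ₁ + W₁) * M₁ ^ 2 + M₁ :=
    Real.sq_sqrt (by nlinarith [sq_nonneg M₁])
  have hA2 : A ^ 2 = 2 * Λ₁ + 2 * W₁ + 21 := Real.sq_sqrt (by nlinarith)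
  set f₀ : ZMod N → ℂ := fun j => ((Real.exp (-γ * d j) : ℝ) : ℂ) * f j with hf₀
  set u : ZMod N → ℂ := G f₀ with hu
  set g : ZMod N → ℂ := fun i => ((Real.exp (γ * d i) : ℝ) : ℂ) * u i with hg
  have hueq : ∀ i, lam * u i - (discLap h u i + (V i : ℂ) * u i) = f₀ i := by
    intro i
    exact congrFun (hG2 f₀) i
  -- additivity of G
  have hGadd : ∀ x y : ZMod N → ℂ, G (fun i => x i + y i) = fun i => G x i + G y i := by
    intro x y
    set F : ZMod N → ℂ := fun i => G x i + G y i with hF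
    have h1 := hG1 F
    have hT : (fun i => lam * F i - (discLap h F i + (V i : ℂ) * F i))
        = fun i => x i + y i := by
      funext i
      have hx := congrFun (hG2 x) i
      have hy := congrFun (hG2 y) i
      have hlin : discLap h F i = discLap h (G x) i + discLap h (G y) i := by
        simp only [hF, discLap, Dplus, Dminus]
        ring
      simp only [hF]
      rw [hlin]
      linear_combination hx + hy
    rw [hT] at h1
    exact h1
  -- p
  set p : ZMod N → ℂ := fun i => lam * g i - (discLap h g i + (V i : ℂ) * g i) - f i
    with hp_def
  have heqg : ∀ i, lam * g i - (discLap h g i + (V i : ℂ) * g i) = f i + p i := by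
    intro i
    simp only [hp_def]
    ring
  have hGfp : g = fun i => G f i + G p i := by
    have h1 := hG1 g
    rw [show (fun i => lam * g i - (discLap h g i + (V i : ℂ) * g i)) = fun i => f i + p i
      from funext heqg] at h1
    rw [← h1]
    exact hGadd f p
  -- formula for p
  have hp_mul : ∀ i, (h : ℂ) * p i
      = (((Real.exp (γ * (d i - d (i + 1))) - 1) / h : ℝ) : ℂ) * g (i + 1)
        + (((Real.exp (γ * (d i - d (i - 1))) - 1) / h : ℝ) : ℂ) * g (i - 1) := by
    intro i
    have hui := hueq i
    have hF1 : ((Real.exp (γ * d i) : ℝ) : ℂ) * ((Real.exp (-γ * d i) : ℝ) : ℂ) = 1 := by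
      rw [← Complex.ofReal_mul, ← Real.exp_add]
      norm_num
    have hpi : p i = ((Real.exp (γ * d i) : ℝ) : ℂ) * discLap h u i - discLap h g i := by
      simp only [hp_def, hg, hf₀] at hui ⊢
      linear_combination ((Real.exp (γ * d i) : ℝ) : ℂ) * hui + f i * hF1
    have hWa := exp_split γ (d i) (d (i + 1))
    have hWb := exp_split γ (d i) (d (i - 1))
    have hcalc : (h : ℂ) * p i
        = (((Real.exp (γ * d i) : ℝ) : ℂ) * (u (i + 1) - 2 * u i + u (i - 1))
            - (((Real.exp (γ * d (i + 1)) : ℝ) : ℂ) * u (i + 1)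
              - 2 * (((Real.exp (γ * d i) : ℝ) : ℂ) * u i)
              + ((Real.exp (γ * d (i - 1)) : ℝ) : ℂ) * u (i - 1))) / (h : ℂ) := by
      rw [hpi, discLap_eq h (ne_of_gt hh) u i, discLap_eq h (ne_of_gt hh) g i]
      simp only [hg]
      field_simp
    have hea : (((Real.exp (γ * (d i - d (i + 1))) - 1) / h : ℝ) : ℂ) * (h : ℂ)
        = ((Real.exp (γ * (d i - d (i + 1))) : ℝ) : ℂ) - 1 := by
      have e : ((Real.exp (γ * (d i - d (i + 1))) - 1) / h * h : ℝ)
          = Real.exp (γ * (d i - d (i + 1))) - 1 := by field_simp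
      exact_mod_cast e
    have heb : (((Real.exp (γ * (d i - d (i - 1))) - 1) / h : ℝ) : ℂ) * (h : ℂ)
        = ((Real.exp (γ * (d i - d (i - 1))) : ℝ) : ℂ) - 1 := by
      have e : ((Real.exp (γ * (d i - d (i - 1))) - 1) / h * h : ℝ)
          = Real.exp (γ * (d i - d (i - 1))) - 1 := by field_simp
      exact_mod_cast e
    have hnum : (((Real.exp (γ * d i) : ℝ) : ℂ) * (u (i + 1) - 2 * u i + u (i - 1))
            - (((Real.exp (γ * d (i + 1)) : ℝ) : ℂ) * u (i + 1)
              - 2 * (((Real.exp (γ * d i) : ℝ) : ℂ) * u i)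
              + ((Real.exp (γ * d (i - 1)) : ℝ) : ℂ) * u (i - 1)))
        = (h : ℂ) * ((((Real.exp (γ * (d i - d (i + 1))) - 1) / h : ℝ) : ℂ)
            * (((Real.exp (γ * d (i + 1)) : ℝ) : ℂ) * u (i + 1))
          + (((Real.exp (γ * (d i - d (i - 1))) - 1) / h : ℝ) : ℂ)
            * (((Real.exp (γ * d (i - 1)) : ℝ) : ℂ) * u (i - 1))) := by
      linear_combination (-(u (i + 1) * ((Real.exp (γ * d (i + 1)) : ℝ) : ℂ))) * hea
        + (-(u (i - 1) * ((Real.exp (γ * d (i - 1)) : ℝ) : ℂ))) * heb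
        + u (i + 1) * hWa + u (i - 1) * hWb
    rw [hcalc]
    simp only [hg]
    rw [hnum, mul_div_cancel_left₀ _ hc]
  -- pairing bound
  have hpair : ∀ ψ : ZMod N → ℂ,
      ‖∑ i : ZMod N, (starRingEnd ℂ) (ψ i) * p i‖
        ≤ 2 * γ * (nn ψ * nn (Dplus h g)) + 2 * γ * (nn (Dplus h ψ) * nn g)
          + 2 * γ ^ 2 * (nn ψ * nn g) :=
    fun ψ => pairB h γ hh hh1 hγ hγ1 d hd ψ g p hp_mul
  -- energy estimate for g
  set Dn := nn (Dplus h g) with hDn_def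
  have hDnn : 0 ≤ Dn := nn_nonneg _
  have hDD : Dn = nn (Dminus h g) := nn_dplus h g
  have hen : nn (Dminus h g) ^ 2 ≤ (Λ₁ + W₁) * nn g ^ 2
      + ‖∑ i : ZMod N, (starRingEnd ℂ) (g i) * (f i + p i)‖ :=
    energy h (ne_of_gt hh) V W₁ hV lam Λ₁ hlam g (fun i => f i + p i) heqg
  have hsplit2 : ‖∑ i : ZMod N, (starRingEnd ℂ) (g i) * (f i + p i)‖
      ≤ nn g * nn f + ‖∑ i : ZMod N, (starRingEnd ℂ) (g i) * p i‖ := by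
    have e : ∑ i : ZMod N, (starRingEnd ℂ) (g i) * (f i + p i)
        = (∑ i : ZMod N, (starRingEnd ℂ) (g i) * f i)
          + ∑ i : ZMod N, (starRingEnd ℂ) (g i) * p i := by
      rw [← Finset.sum_add_distrib]
      exact Finset.sum_congr rfl fun i _ => by ring
    rw [e]
    exact le_trans (norm_add_le _ _) (add_le_add (cs' g f) le_rfl)
  have hpg := hpair g
  have hq : Dn ^ 2 ≤ (2 * Λ₁ + 2 * W₁ + 21) * (nn g + nn f) ^ 2 := by
    rw [← hDn_def] at hpg
    rw [← hDD] at hen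
    have h1 : Dn ^ 2 ≤ (Λ₁ + W₁) * nn g ^ 2 + nn g * nn f
        + (4 * γ * (nn g * Dn) + 2 * γ ^ 2 * (nn g * nn g)) := by
      linarith [hen, hsplit2, hpg]
    have hγ2 : γ ^ 2 ≤ γ := by nlinarith
    have c1 : 4 * γ * (nn g * Dn) ≤ (1 / 2) * Dn ^ 2 + 8 * nn g ^ 2 := by
      nlinarith [sq_nonneg (Dn - 4 * nn g),
        mul_nonneg (mul_nonneg (sub_nonneg.mpr hγ1) (nn_nonneg g)) hDnn]
    have c2 : 2 * γ ^ 2 * (nn g * nn g) ≤ 2 * nn g ^ 2 := by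
      nlinarith [mul_nonneg (sub_nonneg.mpr hγ2) (mul_nonneg (nn_nonneg g) (nn_nonneg g)),
        mul_nonneg (mul_nonneg (sub_nonneg.mpr hγ1) (nn_nonneg g)) (nn_nonneg g)]
    have c4 : (Λ₁ + W₁) * nn g ^ 2 ≤ (Λ₁ + W₁) * (nn g + nn f) ^ 2 :=
      mul_le_mul_of_nonneg_left (by nlinarith [nn_nonneg g, nn_nonneg f]) (by linarith)
    have c5 : 2 * (nn g * nn f) + 20 * nn g ^ 2 ≤ 21 * (nn g + nn f) ^ 2 := by
      nlinarith [mul_nonneg (nn_nonneg g) (nn_nonneg f), sq_nonneg (nn g), sq_nonneg (nn f)]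
    linarith
  have hDle : Dn ≤ A * (nn g + nn f) := by
    have h1 : Dn = Real.sqrt (Dn ^ 2) := (Real.sqrt_sq hDnn).symm
    rw [h1]
    refine le_trans (Real.sqrt_le_sqrt hq) ?_
    rw [← hA2, show A ^ 2 * (nn g + nn f) ^ 2 = (A * (nn g + nn f)) ^ 2 by ring,
      Real.sqrt_sq (mul_nonneg hAnn (add_nonneg (nn_nonneg g) (nn_nonneg f)))]
  -- adjoint
  set φ : ZMod N → ℂ := G p with hφ
  set cφ : ZMod N → ℂ := fun j => (starRingEnd ℂ) (φ j) with hcφ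
  set ψK : ZMod N → ℂ := fun i => (starRingEnd ℂ) (G cφ i) with hψK
  have hKeq : ∀ i, (starRingEnd ℂ) lam * ψK i - (discLap h ψK i + (V i : ℂ) * ψK i)
      = φ i := by
    intro i
    have h0 : lam * G cφ i - (discLap h (G cφ) i + (V i : ℂ) * G cφ i)
        = (starRingEnd ℂ) (φ i) := congrFun (hG2 cφ) i
    have h1 := congrArg (starRingEnd ℂ) h0
    simp only [map_sub, map_add, map_mul, Complex.conj_conj, Complex.conj_ofReal,
      conj_discLap] at h1
    exact h1
  have hψKn : nn ψK ≤ M₁ * nn φ := by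
    have e1 : nn ψK = nn (G cφ) :=
      nn_congr _ _ (fun i => by simp only [hψK]; exact RCLike.norm_conj _)
    have e2 : nn cφ = nn φ :=
      nn_congr _ _ (fun i => by simp only [hcφ]; exact RCLike.norm_conj _)
    rw [e1]
    exact le_trans (hGn cφ) (by rw [e2])
  have hDK : nn (Dplus h ψK) ≤ E * nn φ := by
    rw [nn_dplus]
    have hen2 : nn (Dminus h ψK) ^ 2 ≤ (Λ₁ + W₁) * nn ψK ^ 2
        + ‖∑ i : ZMod N, (starRingEnd ℂ) (ψK i) * φ i‖ :=
      energy h (ne_of_gt hh) V W₁ hV ((starRingEnd ℂ) lam) Λ₁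
        (by rw [RCLike.norm_conj]; exact hlam) ψK φ hKeq
    have hcs2 := cs' ψK φ
    have hsq : nn ψK ^ 2 ≤ (M₁ * nn φ) ^ 2 := by
      have := pow_le_pow_left₀ (nn_nonneg ψK) hψKn 2
      simpa using this
    have h2 : nn (Dminus h ψK) ^ 2 ≤ (E * nn φ) ^ 2 := by
      have t1 : (Λ₁ + W₁) * nn ψK ^ 2 ≤ (Λ₁ + W₁) * (M₁ * nn φ) ^ 2 :=
        mul_le_mul_of_nonneg_left hsq (by linarith)
      have t2 : ‖∑ i : ZMod N, (starRingEnd ℂ) (ψK i) * φ i‖ ≤ M₁ * nn φ * nn φ :=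
        le_trans hcs2 (mul_le_mul_of_nonneg_right hψKn (nn_nonneg φ))
      have : nn (Dminus h ψK) ^ 2 ≤ ((Λ₁ + W₁) * M₁ ^ 2 + M₁) * nn φ ^ 2 := by
        nlinarith
      rw [show (E * nn φ) ^ 2 = E ^ 2 * nn φ ^ 2 by ring, hE2]
      exact this
    calc nn (Dminus h ψK) = Real.sqrt (nn (Dminus h ψK) ^ 2) :=
        (Real.sqrt_sq (nn_nonneg _)).symm
      _ ≤ Real.sqrt ((E * nn φ) ^ 2) := Real.sqrt_le_sqrt h2
      _ = E * nn φ := Real.sqrt_sq (mul_nonneg hEnn (nn_nonneg φ))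
  -- duality
  have hdual : ∑ i : ZMod N, (starRingEnd ℂ) (φ i) * φ i
      = ∑ i : ZMod N, (starRingEnd ℂ) (ψK i) * p i := by
    have e0 : ∀ i : ZMod N, (starRingEnd ℂ) (φ i)
        = lam * G cφ i - (discLap h (G cφ) i + (V i : ℂ) * G cφ i) :=
      fun i => (congrFun (hG2 cφ) i).symm
    have e1 : ∀ i : ZMod N, p i
        = lam * φ i - (discLap h φ i + (V i : ℂ) * φ i) :=
      fun i => (congrFun (hG2 p) i).symm
    calc ∑ i : ZMod N, (starRingEnd ℂ) (φ i) * φ i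
        = ∑ i : ZMod N, (lam * (G cφ i * φ i) - discLap h (G cφ) i * φ i
            - (V i : ℂ) * (G cφ i * φ i)) := by
          refine Finset.sum_congr rfl fun i _ => ?_
          rw [e0 i]; ring
      _ = (∑ i : ZMod N, lam * (G cφ i * φ i))
            - (∑ i : ZMod N, discLap h (G cφ) i * φ i)
            - ∑ i : ZMod N, (V i : ℂ) * (G cφ i * φ i) := by
          rw [Finset.sum_sub_distrib, Finset.sum_sub_distrib]
      _ = (∑ i : ZMod N, lam * (G cφ i * φ i))
            - (∑ i : ZMod N, G cφ i * discLap h φ i)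
            - ∑ i : ZMod N, (V i : ℂ) * (G cφ i * φ i) := by
          rw [← lap_sym h (ne_of_gt hh) (G cφ) φ]
      _ = ∑ i : ZMod N, G cφ i * (lam * φ i - (discLap h φ i + (V i : ℂ) * φ i)) := by
          rw [← Finset.sum_sub_distrib, ← Finset.sum_sub_distrib]
          refine Finset.sum_congr rfl fun i _ => ?_
          ring
      _ = ∑ i : ZMod N, G cφ i * p i := by
          refine Finset.sum_congr rfl fun i _ => ?_
          rw [← e1 i]
      _ = ∑ i : ZMod N, (starRingEnd ℂ) (ψK i) * p i := by
          refine Finset.sum_congr rfl fun i _ => ?_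
          simp only [hψK, Complex.conj_conj]
  have hφsq : nn φ ^ 2 ≤ ‖∑ i : ZMod N, (starRingEnd ℂ) (ψK i) * p i‖ := by
    have e : ∑ i : ZMod N, (starRingEnd ℂ) (φ i) * φ i
        = ((∑ i : ZMod N, ‖φ i‖ ^ 2 : ℝ) : ℂ) := by
      rw [Finset.sum_congr rfl fun i _ => conj_mul_self (φ i)]
      push_cast
      rfl
    rw [nn_sq]
    have e2 : (∑ i : ZMod N, ‖φ i‖ ^ 2)
        = ‖∑ i : ZMod N, (starRingEnd ℂ) (ψK i) * p i‖ := by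
      rw [← hdual, e, Complex.norm_real, Real.norm_eq_abs,
        abs_of_nonneg (Finset.sum_nonneg fun i _ => by positivity)]
    exact le_of_eq e2
  clear_value f₀ u g p φ cφ ψK Dn E A
  -- bound on nn φ
  have hφle : nn φ ≤ γ * (2 * (M₁ * A + E + M₁)) * nn g + 2 * γ * M₁ * A * nn f := by
    have hb := hpair ψK
    have hR : nn φ ^ 2 ≤ nn φ * (2 * γ * M₁ * Dn + 2 * γ * E * nn g
        + 2 * γ ^ 2 * M₁ * nn g) := by
      refine le_trans hφsq (le_trans hb ?_)
      have t1 : 2 * γ * (nn ψK * Dn) ≤ nn φ * (2 * γ * M₁ * Dn) := by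
        have := mul_le_mul_of_nonneg_right hψKn hDnn
        nlinarith [hγ.le]
      have t2 : 2 * γ * (nn (Dplus h ψK) * nn g) ≤ nn φ * (2 * γ * E * nn g) := by
        have := mul_le_mul_of_nonneg_right hDK (nn_nonneg g)
        nlinarith [hγ.le]
      have t3 : 2 * γ ^ 2 * (nn ψK * nn g) ≤ nn φ * (2 * γ ^ 2 * M₁ * nn g) := by
        have := mul_le_mul_of_nonneg_right hψKn (nn_nonneg g)
        nlinarith [sq_nonneg γ]
      linarith
    have hφc : nn φ ≤ 2 * γ * M₁ * Dn + 2 * γ * E * nn g + 2 * γ ^ 2 * M₁ * nn g := by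
      rcases eq_or_lt_of_le (nn_nonneg φ) with h0 | h0
      · rw [← h0]
        have n1 : (0:ℝ) ≤ 2 * γ * M₁ * Dn :=
          mul_nonneg (mul_nonneg (mul_nonneg (by norm_num) hγ.le) hM₁) hDnn
        have n2 : (0:ℝ) ≤ 2 * γ * E * nn g :=
          mul_nonneg (mul_nonneg (mul_nonneg (by norm_num) hγ.le) hEnn) (nn_nonneg g)
        have n3 : (0:ℝ) ≤ 2 * γ ^ 2 * M₁ * nn g :=
          mul_nonneg (mul_nonneg (mul_nonneg (by norm_num) (sq_nonneg γ)) hM₁) (nn_nonneg g)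
        linarith
      · have := hR
        rw [pow_two] at this
        exact le_of_mul_le_mul_left this h0
    calc nn φ ≤ 2 * γ * M₁ * Dn + 2 * γ * E * nn g + 2 * γ ^ 2 * M₁ * nn g := hφc
      _ ≤ 2 * γ * M₁ * (A * (nn g + nn f)) + 2 * γ * E * nn g + 2 * γ * M₁ * nn g := by
          have t1 : 2 * γ * M₁ * Dn ≤ 2 * γ * M₁ * (A * (nn g + nn f)) :=
            mul_le_mul_of_nonneg_left hDle (by positivity)
          have t2 : 2 * γ ^ 2 * M₁ * nn g ≤ 2 * γ * M₁ * nn g := by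
            have hγ2 : γ ^ 2 ≤ γ := by nlinarith
            have := mul_nonneg (mul_nonneg (sub_nonneg.mpr hγ2) hM₁) (nn_nonneg g)
            nlinarith [this]
          linarith
      _ = γ * (2 * (M₁ * A + E + M₁)) * nn g + 2 * γ * M₁ * A * nn f := by ring
  -- conclusion
  have hfin1 : nn g ≤ nn (G f) + nn φ :=
    le_trans (le_of_eq (congrArg nn hGfp)) (nn_triangle (G f) φ)
  have haux1 : γ * (2 * (M₁ * A + E + M₁)) * nn g ≤ (1 / 2) * nn g :=
    mul_le_mul_of_nonneg_right hγsmall (nn_nonneg g)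
  have haux2 : 2 * γ * M₁ * A * nn f ≤ (1 / 2) * nn f := by
    have h2 : 2 * γ * M₁ * A ≤ γ * (2 * (M₁ * A + E + M₁)) := by
      nlinarith [hγ.le]
    exact le_trans (mul_le_mul_of_nonneg_right h2 (nn_nonneg f))
      (mul_le_mul_of_nonneg_right hγsmall (nn_nonneg f))
  have hGnf := hGn f
  linarith

end

noncomputable section
set_option maxHeartbeats 1000000


/-- exponential decay estimate for the finite difference resolvent,
with constants `γ₀, C` depending only on the resolvent bound `M`, `|λ| ≤ Λ` and
`‖V‖_∞ ≤ W`, uniformly in `L ≥ 1` and `Δx = L/N ≤ 1`. -/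
theorem stmt_1 (M Λ W : ℝ) :
    ∃ γ₀ > (0 : ℝ), ∃ C > (0 : ℝ),
      ∀ (L : ℝ) (N : ℕ) [NeZero N], 1 ≤ L → L / N ≤ 1 →
      ∀ V : ZMod N → ℝ, (∀ i, |V i| ≤ W) →
      ∀ lam : ℂ, ‖lam‖ ≤ Λ →
      ∀ G : (ZMod N → ℂ) → (ZMod N → ℂ),
        (∀ f, G (fun i => lam * f i - (discLap (L / N) f i + (V i : ℂ) * f i)) = f) →
        (∀ f, (fun i => lam * G f i - (discLap (L / N) (G f) i + (V i : ℂ) * G f i)) = f) →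
        (∀ f, wnorm (L / N) (G f) ≤ M * wnorm (L / N) f) →
      ∀ γ : ℝ, 0 < γ → γ ≤ γ₀ →
      ∀ (y : ZMod N) (f : ZMod N → ℂ),
        wnorm (L / N)
            (fun i => (Real.exp (γ * dL L (gridX L N i) (gridX L N y)) : ℂ) *
              G (fun j => (Real.exp (-γ * dL L (gridX L N j) (gridX L N y)) : ℂ) * f j) i) ≤
          C * wnorm (L / N) f := by
  set M₁ := max M 0 with hM₁def
  set Λ₁ := max Λ 0 with hΛ₁def
  set W₁ := max W 0 with hW₁def
  set E := Real.sqrt ((Λ₁ + W₁) * M₁ ^ 2 + M₁) with hEdef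
  set A := Real.sqrt (2 * Λ₁ + 2 * W₁ + 21) with hAdef
  set C₁ := 2 * (M₁ * A + E + M₁) with hC₁def
  have hM₁ : 0 ≤ M₁ := le_max_right M 0
  have hΛ₁ : 0 ≤ Λ₁ := le_max_right Λ 0
  have hW₁ : 0 ≤ W₁ := le_max_right W 0
  have hEnn : 0 ≤ E := Real.sqrt_nonneg _
  have hAnn : 0 ≤ A := Real.sqrt_nonneg _
  have hC₁nn : 0 ≤ C₁ := by
    rw [hC₁def]
    nlinarith [mul_nonneg hM₁ hAnn]
  refine ⟨min 1 (1 / (2 * C₁ + 2)), lt_min one_pos (div_pos one_pos (by linarith)),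
    2 * M₁ + 1, by linarith, ?_⟩
  intro L N instN hL hdx V hV lam hlam G hG1 hG2 hGnorm γ hγ0 hγle y f
  have hN0 : (0 : ℝ) < N := by
    have := Nat.pos_of_ne_zero (NeZero.ne N)
    exact_mod_cast this
  have hh : 0 < L / N := div_pos (by linarith) hN0
  have hγ1 : γ ≤ 1 := le_trans hγle (min_le_left _ _)
  have hγc : γ * C₁ ≤ 1 / 2 := by
    have h1 : γ ≤ 1 / (2 * C₁ + 2) := le_trans hγle (min_le_right _ _)
    have h2 : γ * C₁ ≤ (1 / (2 * C₁ + 2)) * C₁ := mul_le_mul_of_nonneg_right h1 hC₁nn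
    have h3 : (1 / (2 * C₁ + 2)) * C₁ ≤ 1 / 2 := by
      rw [div_mul_eq_mul_div, one_mul, div_le_div_iff₀ (by linarith) two_pos]
      linarith
    linarith
  have hGn : ∀ u : ZMod N → ℂ, nn (G u) ≤ M₁ * nn u := by
    intro u0
    have h1 := hGnorm u0
    rw [wnorm_eq _ hh.le, wnorm_eq _ hh.le] at h1
    have hs : 0 < Real.sqrt (L / N) := Real.sqrt_pos.mpr hh
    have h2 : nn (G u0) ≤ M * nn u0 := by
      rw [mul_left_comm] at h1
      exact le_of_mul_le_mul_left h1 hs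
    calc nn (G u0) ≤ M * nn u0 := h2
      _ ≤ M₁ * nn u0 := mul_le_mul_of_nonneg_right (le_max_left M 0) (nn_nonneg u0)
  have hWb : ∀ i, |V i| ≤ W₁ := fun i => le_trans (hV i) (le_max_left W 0)
  have hlam1 : ‖lam‖ ≤ Λ₁ := le_trans hlam (le_max_left Λ 0)
  have key := main_aux (L / N) γ M₁ Λ₁ W₁ hh hdx hγ0 hγ1 hM₁ hW₁ hΛ₁ V hWb lam hlam1
    G hG1 hG2 hGn
    (fun i => dL L (gridX L N i) (gridX L N y))
    (fun i => dstep L (by linarith) N y i)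
    hγc f
  rw [wnorm_eq _ hh.le, wnorm_eq _ hh.le]
  have hs := Real.sqrt_nonneg (L / N)
  refine le_trans (mul_le_mul_of_nonneg_left key hs) (le_of_eq (by ring))
end
end

section
/- Let L ≥ 1, N a positive even integer, Δx = L/N, and let g : 𝒳 → ℂ be a lattice function with discrete Fourier transform ĝ. Then ‖ d(·,0) g ‖_{L²(𝒳)} ≤ (√π / (2√2)) ‖ 𝒟 ĝ ‖_{L²(𝒦)}, where d(x,0) = x for x ∈ [0, L/2) and d(x,0) = L − x for x ∈ [L/2, L). -/
open scoped BigOperators Real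
open MeasureTheory

set_option linter.unusedSectionVars false
set_option linter.unusedVariables false

noncomputable def om (N : ℕ) : ℂ := Complex.exp (-(2 * Real.pi * Complex.I) / N)

lemma om_ne_zero (N : ℕ) : om N ≠ 0 := Complex.exp_ne_zero _

lemma om_pow_N (N : ℕ) (hN : N ≠ 0) : om N ^ (N : ℤ) = 1 := by
  have hN' : (N : ℂ) ≠ 0 := Nat.cast_ne_zero.mpr hN
  rw [om, ← Complex.exp_int_mul]
  rw [show ((N:ℤ):ℂ) * (-(2 * Real.pi * Complex.I) / N) = (-1 : ℤ) * (2 * Real.pi * Complex.I) by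
    push_cast; field_simp]
  exact Complex.exp_int_mul_two_pi_mul_I (-1)

lemma om_zpow_congr {N : ℕ} [NeZero N] {a b : ℤ} (h : (a : ZMod N) = (b : ZMod N)) :
    om N ^ a = om N ^ b := by
  have hd : (N : ℤ) ∣ b - a := by
    have : ((b - a : ℤ) : ZMod N) = 0 := by push_cast [h]; ring
    exact (ZMod.intCast_zmod_eq_zero_iff_dvd _ _).mp this
  obtain ⟨t, ht⟩ := hd
  have hb : b = a + N * t := by linarith
  rw [hb, zpow_add₀ (om_ne_zero N), zpow_mul, om_pow_N N (NeZero.ne N), one_zpow, mul_one]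


section
variable (L : ℝ) (N : ℕ) [NeZero N]

lemma exp_kval (hL : L ≠ 0) (j i : ZMod N) :
    Complex.exp (-Complex.I * (kval L N j : ℂ) * ((gridX L N i : ℝ) : ℂ)) =
      om N ^ ((ZMod.val j * ZMod.val i : ℕ) : ℤ) := by
  have hN : (N : ℝ) ≠ 0 := Nat.cast_ne_zero.mpr (NeZero.ne N)
  set m : ℤ := if (ZMod.val j : ℤ) ≤ (N : ℤ) / 2 then (ZMod.val j : ℤ) else (ZMod.val j : ℤ) - N
    with hm
  have hk : kval L N j = (m : ℝ) * (2 * Real.pi / L) := by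
    rw [kval, hm]
    split_ifs with h <;> push_cast <;> ring
  have harg : -Complex.I * (kval L N j : ℂ) * ((gridX L N i : ℝ) : ℂ)
      = ((m * ZMod.val i : ℤ) : ℂ) * (-(2 * Real.pi * Complex.I) / N) := by
    have hLc : (L : ℂ) ≠ 0 := Complex.ofReal_ne_zero.mpr hL
    have hNc : (N : ℂ) ≠ 0 := Nat.cast_ne_zero.mpr (NeZero.ne N)
    rw [hk, gridX]
    push_cast
    field_simp
  rw [harg, Complex.exp_int_mul, ← om]
  apply om_zpow_congr
  have hmz : ((m : ZMod N)) = ((ZMod.val j : ℤ) : ZMod N) := by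
    rw [hm]; split_ifs with h
    · rfl
    · push_cast; simp
  push_cast
  rw [hmz]
  push_cast
  ring
end


section
variable (L : ℝ) (N : ℕ) [NeZero N]

lemma dft_eq (hL : L ≠ 0) (f : ZMod N → ℂ) (j : ZMod N) :
    dft L f j = ((L / N : ℝ) : ℂ) * ∑ i : ZMod N, om N ^ ((ZMod.val j * ZMod.val i : ℕ) : ℤ) * f i := by
  rw [dft]
  congr 1
  refine Finset.sum_congr rfl fun i _ => ?_
  rw [exp_kval L N hL]

lemma Efun_eq (hL : L ≠ 0) (i : ZMod N) :
    Complex.exp (Complex.I * ((2 * Real.pi / L : ℝ) : ℂ) * ((gridX L N i : ℝ) : ℂ)) =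
      om N ^ (-(ZMod.val i : ℤ)) := by
  have hLc : (L : ℂ) ≠ 0 := Complex.ofReal_ne_zero.mpr hL
  have hNc : (N : ℂ) ≠ 0 := Nat.cast_ne_zero.mpr (NeZero.ne N)
  have harg : Complex.I * ((2 * Real.pi / L : ℝ) : ℂ) * ((gridX L N i : ℝ) : ℂ)
      = (Int.cast (-(ZMod.val i : ℤ)) : ℂ) * (-(2 * Real.pi * Complex.I) / N) := by
    rw [gridX]; push_cast; field_simp
  rw [harg, Complex.exp_int_mul, ← om]

lemma Dk_dft (hL : L ≠ 0) (g : ZMod N → ℂ) (j : ZMod N) :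
    Dk (2 * Real.pi / L) (dft L g) j =
      dft L (fun i =>
        (1 - Complex.exp (Complex.I * ((2 * Real.pi / L : ℝ) : ℂ) * ((gridX L N i : ℝ) : ℂ))) /
          ((2 * Real.pi / L : ℝ) : ℂ) * g i) j := by
  have hLc : (L : ℂ) ≠ 0 := Complex.ofReal_ne_zero.mpr hL
  have hpi : ((Real.pi : ℝ) : ℂ) ≠ 0 := Complex.ofReal_ne_zero.mpr Real.pi_ne_zero
  have hom := om_ne_zero N
  have hkey : ∀ i : ZMod N, om N ^ ((ZMod.val (j - 1) * ZMod.val i : ℕ) : ℤ) =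
      om N ^ ((ZMod.val j * ZMod.val i : ℕ) : ℤ) * om N ^ (-(ZMod.val i : ℤ)) := by
    intro i
    rw [← zpow_add₀ (om_ne_zero N)]
    apply om_zpow_congr
    push_cast
    simp only [ZMod.natCast_val, ZMod.cast_id]
    ring
  rw [Dk, dft_eq L N hL, dft_eq L N hL, dft_eq L N hL]
  simp only [hkey, Efun_eq L N hL]
  rw [div_eq_iff (by
    simp only [ne_eq, Complex.ofReal_eq_zero, div_eq_zero_iff]
    push_neg
    constructor
    · positivity
    · exact hL)]
  rw [← mul_sub, ← Finset.sum_sub_distrib]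
  rw [mul_assoc, Finset.sum_mul]
  congr 1
  refine Finset.sum_congr rfl fun i _ => ?_
  push_cast
  field_simp

lemma sum_val_pow (w : ℂ) : ∑ j : ZMod N, w ^ (ZMod.val j) = ∑ n ∈ Finset.range N, w ^ n := by
  obtain ⟨n, rfl⟩ := Nat.exists_eq_succ_of_ne_zero (NeZero.ne N)
  exact Fin.sum_univ_eq_sum_range (fun k => w ^ k) (n + 1)

lemma om_orth (d : ℤ) :
    ∑ j : ZMod N, om N ^ ((ZMod.val j : ℤ) * d) =
      if (d : ZMod N) = 0 then (N : ℂ) else 0 := by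
  have h1 : ∀ j : ZMod N, om N ^ ((ZMod.val j : ℤ) * d) = (om N ^ d) ^ (ZMod.val j) := by
    intro j
    rw [← zpow_natCast (om N ^ d) (ZMod.val j), ← zpow_mul]
    ring_nf
  simp only [h1]
  rw [sum_val_pow]
  by_cases hd : (d : ZMod N) = 0
  · obtain ⟨t, ht⟩ := (ZMod.intCast_zmod_eq_zero_iff_dvd _ _).mp hd
    have hw : om N ^ d = 1 := by
      rw [ht, zpow_mul, om_pow_N N (NeZero.ne N), one_zpow]
    simp [hw, hd]
  · have hw : om N ^ d ≠ 1 := by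
      intro hcon
      apply hd
      rw [om, ← Complex.exp_int_mul] at hcon
      obtain ⟨n, hn⟩ := Complex.exp_eq_one_iff.mp hcon
      have hNc : (N : ℂ) ≠ 0 := Nat.cast_ne_zero.mpr (NeZero.ne N)
      have h2pi : (2 * (Real.pi : ℂ) * Complex.I) ≠ 0 := by
        simp [Real.pi_ne_zero, Complex.I_ne_zero]
      have h2 : (d : ℂ) * (2 * (Real.pi : ℂ) * Complex.I)
          = ((-n * N : ℤ) : ℂ) * (2 * (Real.pi : ℂ) * Complex.I) := by
        push_cast
        field_simp at hn
        linear_combination (-(2 * (Real.pi : ℂ) * Complex.I)) * hn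
      have h3 : (d : ℂ) = ((-n * N : ℤ) : ℂ) := mul_right_cancel₀ h2pi h2
      have hdn : d = -n * N := by exact_mod_cast h3
      rw [hdn]
      push_cast
      simp
    rw [geom_sum_eq hw]
    have hwN : (om N ^ d) ^ N = 1 := by
      rw [← zpow_natCast, ← zpow_mul, mul_comm, zpow_mul, om_pow_N N (NeZero.ne N), one_zpow]
    rw [hwN]
    simp [hd]
end


section
variable (L : ℝ) (N : ℕ) [NeZero N]

lemma conj_om (z : ℤ) : (starRingEnd ℂ) (om N ^ z) = om N ^ (-z) := by
  have h : (starRingEnd ℂ) (om N) = (om N)⁻¹ := by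
    rw [om, ← Complex.exp_conj, ← Complex.exp_neg]
    congr 1
    simp [map_div₀, map_ofNat, Complex.conj_ofReal, Complex.conj_I]
    ring
  rw [map_zpow₀, h, inv_zpow, ← zpow_neg]

lemma om_orth' (i i' : ZMod N) :
    ∑ j : ZMod N, om N ^ ((ZMod.val j : ℤ) * ((ZMod.val i : ℤ) - (ZMod.val i' : ℤ))) =
      if i = i' then (N : ℂ) else 0 := by
  rw [om_orth]
  have hcast : ((((ZMod.val i : ℤ) - (ZMod.val i' : ℤ)) : ℤ) : ZMod N) = i - i' := by
    push_cast
    simp [ZMod.natCast_val, ZMod.cast_id]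
  exact if_congr (by rw [hcast, sub_eq_zero]) rfl rfl

lemma parseval (hL : L ≠ 0) (f : ZMod N → ℂ) :
    ∑ j : ZMod N, ‖dft L f j‖ ^ 2 = (L / N) ^ 2 * N * ∑ i : ZMod N, ‖f i‖ ^ 2 := by
  have hom := om_ne_zero N
  have key : ∑ j : ZMod N, (dft L f j * (starRingEnd ℂ) (dft L f j))
      = (((L / N : ℝ) : ℂ)) ^ 2 * ((N : ℂ) * ∑ i : ZMod N, f i * (starRingEnd ℂ) (f i)) := by
    have step1 : ∀ j : ZMod N, dft L f j * (starRingEnd ℂ) (dft L f j)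
        = (((L / N : ℝ) : ℂ)) ^ 2 * ∑ i : ZMod N, ∑ i' : ZMod N,
            om N ^ ((ZMod.val j : ℤ) * ((ZMod.val i : ℤ) - (ZMod.val i' : ℤ))) *
              (f i * (starRingEnd ℂ) (f i')) := by
      intro j
      rw [dft_eq L N hL, map_mul, map_sum, Complex.conj_ofReal, mul_mul_mul_comm, ← sq,
        Finset.sum_mul_sum]
      congr 1
      refine Finset.sum_congr rfl fun i _ => ?_
      refine Finset.sum_congr rfl fun i' _ => ?_
      rw [map_mul, conj_om, ← mul_mul_mul_comm, ← zpow_add₀ (om_ne_zero N),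
        show ((ZMod.val j * ZMod.val i : ℕ) : ℤ) + -((ZMod.val j * ZMod.val i' : ℕ) : ℤ)
          = (ZMod.val j : ℤ) * ((ZMod.val i : ℤ) - (ZMod.val i' : ℤ)) by push_cast; ring]
    simp only [step1]
    rw [← Finset.mul_sum]
    congr 1
    rw [Finset.sum_comm]
    have swap2 : ∀ i : ZMod N, ∑ j : ZMod N, ∑ i' : ZMod N,
        om N ^ ((ZMod.val j : ℤ) * ((ZMod.val i : ℤ) - (ZMod.val i' : ℤ))) *
          (f i * (starRingEnd ℂ) (f i'))
        = ∑ i' : ZMod N, (∑ j : ZMod N,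
            om N ^ ((ZMod.val j : ℤ) * ((ZMod.val i : ℤ) - (ZMod.val i' : ℤ)))) *
          (f i * (starRingEnd ℂ) (f i')) := by
      intro i
      rw [Finset.sum_comm]
      exact Finset.sum_congr rfl fun i' _ => (Finset.sum_mul _ _ _).symm
    simp only [swap2, om_orth' N]
    rw [Finset.mul_sum]
    refine Finset.sum_congr rfl fun i _ => ?_
    simp [Finset.sum_ite_eq]
  have hz : ∀ z : ℂ, ((‖z‖ : ℝ) : ℂ) ^ 2 = z * (starRingEnd ℂ) z := by
    intro z
    rw [Complex.mul_conj]
    norm_cast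
    simp [Complex.normSq_eq_norm_sq]
  apply Complex.ofReal_injective
  push_cast
  simp only [hz]
  rw [key]
  push_cast
  ring
end


lemma norm_one_sub_exp_sq (θ : ℝ) :
    ‖1 - Complex.exp ((θ : ℂ) * Complex.I)‖ ^ 2 = 4 * Real.sin (θ / 2) ^ 2 := by
  rw [Complex.exp_mul_I]
  have h1 : (1 : ℂ) - (Complex.cos θ + Complex.sin θ * Complex.I)
      = ((1 - Real.cos θ : ℝ) : ℂ) + ((-Real.sin θ : ℝ) : ℂ) * Complex.I := by
    push_cast [← Complex.ofReal_cos, ← Complex.ofReal_sin]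
    ring
  rw [h1, Complex.sq_norm, Complex.normSq_add_mul_I]
  have h2 := Real.sin_sq_add_cos_sq θ
  have h3 : Real.cos θ = 1 - 2 * Real.sin (θ / 2) ^ 2 := by
    have h5 := Real.cos_two_mul (θ / 2)
    rw [show 2 * (θ / 2) = θ by ring] at h5
    have h4 := Real.sin_sq_add_cos_sq (θ / 2)
    nlinarith
  nlinarith

lemma dfun_le (L x : ℝ) (hL : 0 < L) (hx0 : 0 ≤ x) (hxL : x < L) :
    dfun L x ≤ L / 2 * Real.sin (Real.pi * x / L) := by
  have hpi := Real.pi_pos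
  rw [dfun]
  split_ifs with h
  · have ht0 : 0 ≤ Real.pi * x / L := by positivity
    have ht1 : Real.pi * x / L ≤ Real.pi / 2 := by
      rw [div_le_div_iff₀ hL two_pos]
      nlinarith
    have hj := Real.mul_le_sin ht0 ht1
    have h2 : 2 / Real.pi * (Real.pi * x / L) = 2 * x / L := by
      field_simp
    rw [h2, div_le_iff₀ hL] at hj
    nlinarith
  · push_neg at h
    have hsin : Real.sin (Real.pi * x / L) = Real.sin (Real.pi * (L - x) / L) := by
      rw [← Real.sin_pi_sub]
      congr 1
      field_simp
    rw [hsin]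
    have ht0 : 0 ≤ Real.pi * (L - x) / L := by
      have : 0 ≤ L - x := by linarith
      positivity
    have ht1 : Real.pi * (L - x) / L ≤ Real.pi / 2 := by
      rw [div_le_div_iff₀ hL two_pos]
      nlinarith
    have hj := Real.mul_le_sin ht0 ht1
    have h2 : 2 / Real.pi * (Real.pi * (L - x) / L) = 2 * (L - x) / L := by
      field_simp
    rw [h2, div_le_iff₀ hL] at hj
    nlinarith

lemma sqrt_pi_div_eight : Real.sqrt (Real.pi / 8) = Real.sqrt Real.pi / (2 * Real.sqrt 2) := by
  have hpi := Real.pi_pos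
  have h8 : 2 * Real.sqrt 2 = Real.sqrt 8 := by
    rw [show (8 : ℝ) = 4 * 2 by norm_num, Real.sqrt_mul (by norm_num : (0:ℝ) ≤ 4),
      show (4 : ℝ) = 2 ^ 2 by norm_num, Real.sqrt_sq (by norm_num : (0:ℝ) ≤ 2)]
  have e1 : Real.sqrt (Real.pi / 8) * (2 * Real.sqrt 2) = Real.sqrt Real.pi := by
    rw [h8, ← Real.sqrt_mul (by positivity)]
    norm_num
  have h2 : (0:ℝ) < 2 * Real.sqrt 2 := by positivity
  rw [eq_div_iff (ne_of_gt h2)]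
  exact e1


/-- `‖d(·,0) g‖_{L²(𝒳)} ≤ (√π/(2√2)) ‖𝒟 ĝ‖_{L²(𝒦)}`. -/
theorem stmt_8 (L : ℝ) (N : ℕ) [NeZero N] (hL : 1 ≤ L) (hN : Even N) (g : ZMod N → ℂ) :
    wnorm (L / N) (fun i => ((dfun L (gridX L N i) : ℝ) : ℂ) * g i) ≤
      Real.sqrt Real.pi / (2 * Real.sqrt 2) *
        wnorm (2 * Real.pi / L) (Dk (2 * Real.pi / L) (dft L g)) := by
  classical
  have hNn : (0:ℝ) < (N:ℝ) := by exact_mod_cast Nat.pos_of_ne_zero (NeZero.ne N)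
  have hL0 : (0:ℝ) < L := by linarith
  have hLne : L ≠ 0 := ne_of_gt hL0
  have hpi := Real.pi_pos
  have hdk0 : (0:ℝ) < 2 * Real.pi / L := by positivity
  set h : ZMod N → ℂ := fun i =>
    (1 - Complex.exp (Complex.I * ((2 * Real.pi / L : ℝ) : ℂ) * ((gridX L N i : ℝ) : ℂ))) /
      ((2 * Real.pi / L : ℝ) : ℂ) * g i with hh
  have hsum : ∑ j : ZMod N, ‖Dk (2 * Real.pi / L) (dft L g) j‖ ^ 2
      = ∑ j : ZMod N, ‖dft L h j‖ ^ 2 :=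
    Finset.sum_congr rfl fun j _ => by rw [Dk_dft L N hLne g j]
  have hpars := parseval L N hLne h
  -- pointwise estimate
  have hpt : ∀ i : ZMod N, ‖((dfun L (gridX L N i) : ℝ) : ℂ) * g i‖ ^ 2
      ≤ Real.pi ^ 2 / 4 * ‖h i‖ ^ 2 := by
    intro i
    have hx0 : 0 ≤ gridX L N i := by rw [gridX]; positivity
    have hxL : gridX L N i < L := by
      rw [gridX]
      have hv : (ZMod.val i : ℝ) < (N : ℝ) := by exact_mod_cast ZMod.val_lt i
      calc (ZMod.val i : ℝ) * (L / N) < (N : ℝ) * (L / N) :=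
            mul_lt_mul_of_pos_right hv (by positivity)
        _ = L := by field_simp
    set x := gridX L N i with hx
    have hEarg : Complex.I * ((2 * Real.pi / L : ℝ) : ℂ) * ((x : ℝ) : ℂ)
        = (((2 * Real.pi / L) * x : ℝ) : ℂ) * Complex.I := by push_cast; ring
    have hLHS : ‖((dfun L x : ℝ) : ℂ) * g i‖ ^ 2 = (dfun L x) ^ 2 * ‖g i‖ ^ 2 := by
      rw [norm_mul, mul_pow, Complex.norm_real, Real.norm_eq_abs, sq_abs]
    have hhi : ‖h i‖ ^ 2
        = 4 * Real.sin (Real.pi * x / L) ^ 2 / (2 * Real.pi / L) ^ 2 * ‖g i‖ ^ 2 := by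
      rw [hh]
      simp only
      rw [norm_mul, norm_div, mul_pow, div_pow, hEarg, norm_one_sub_exp_sq,
        Complex.norm_real, Real.norm_eq_abs, sq_abs,
        show (2 * Real.pi / L) * x / 2 = Real.pi * x / L by field_simp]
    have hd0 : 0 ≤ dfun L x := by
      rw [dfun]; split_ifs
      · exact hx0
      · linarith
    have hdle := dfun_le L x hL0 hx0 hxL
    have hsin0 : 0 ≤ Real.sin (Real.pi * x / L) := by nlinarith
    have hsq : (dfun L x) ^ 2 ≤ (L / 2 * Real.sin (Real.pi * x / L)) ^ 2 :=
      pow_le_pow_left₀ hd0 hdle 2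
    have hkey : Real.pi ^ 2 / 4 * (4 * Real.sin (Real.pi * x / L) ^ 2 / (2 * Real.pi / L) ^ 2)
        = (L / 2 * Real.sin (Real.pi * x / L)) ^ 2 := by
      field_simp
    rw [hLHS, hhi, ← mul_assoc, hkey]
    exact mul_le_mul_of_nonneg_right hsq (sq_nonneg _)
  -- sum estimate
  have hg2 : ∑ i : ZMod N, ‖((dfun L (gridX L N i) : ℝ) : ℂ) * g i‖ ^ 2
      ≤ Real.pi ^ 2 / 4 * ∑ i : ZMod N, ‖h i‖ ^ 2 := by
    rw [Finset.mul_sum]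
    exact Finset.sum_le_sum fun i _ => hpt i
  have hmain : (L / N) * ∑ i : ZMod N, ‖((dfun L (gridX L N i) : ℝ) : ℂ) * g i‖ ^ 2
      ≤ Real.pi / 8 * ((2 * Real.pi / L) * ∑ j : ZMod N, ‖Dk (2 * Real.pi / L) (dft L g) j‖ ^ 2) := by
    rw [hsum, hpars]
    have heq : Real.pi / 8 * ((2 * Real.pi / L) * ((L / N) ^ 2 * N * ∑ i : ZMod N, ‖h i‖ ^ 2))
        = (L / N) * (Real.pi ^ 2 / 4 * ∑ i : ZMod N, ‖h i‖ ^ 2) := by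
      field_simp
      ring
    rw [heq]
    exact mul_le_mul_of_nonneg_left hg2 (by positivity)
  rw [wnorm, wnorm]
  calc Real.sqrt ((L / N) * ∑ i : ZMod N, ‖((dfun L (gridX L N i) : ℝ) : ℂ) * g i‖ ^ 2)
      ≤ Real.sqrt (Real.pi / 8 *
          ((2 * Real.pi / L) * ∑ j : ZMod N, ‖Dk (2 * Real.pi / L) (dft L g) j‖ ^ 2)) :=
        Real.sqrt_le_sqrt hmain
    _ = Real.sqrt (Real.pi / 8) *
          Real.sqrt ((2 * Real.pi / L) * ∑ j : ZMod N, ‖Dk (2 * Real.pi / L) (dft L g) j‖ ^ 2) :=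
        Real.sqrt_mul (by positivity) _
    _ = Real.sqrt Real.pi / (2 * Real.sqrt 2) *
          Real.sqrt ((2 * Real.pi / L) * ∑ j : ZMod N, ‖Dk (2 * Real.pi / L) (dft L g) j‖ ^ 2) := by
        rw [sqrt_pi_div_eight]
end
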